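/- arXiv:2002.10505 — 5 statements merged into one kernel-verified Lean document; each statement's English description precedes it below -/
import Mathlib

section
/- For every t ≤ T, the difference between the closed-loop perturbation state and the linear perturbation state, ε ↦ δx_t(ε) − δx^l_t(ε), is O(ε²) as ε → 0. (Lemma 1, first part: the state perturbation of the nonlinear closed loop agrees with that of its linearization up to a second-order error in the noise scale ε, along any fixed noise sample path.) -/
open Asymptotics Filter

lemma quad_bigO (g : ℝ → ℝ) (hg : ContDiff ℝ 2 g) (h0 : g 0 = 0) (h1 : deriv g 0 = 0) :
    (fun x : ℝ => g x) =O[nhds (0 : ℝ)] (fun x : ℝ => x ^ 2) := by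
  have hg' : ContDiff ℝ ((1 : ℕ∞) + 1) g := by
    norm_num
    exact hg
  have hsplit0 := contDiff_succ_iff_deriv.mp hg'
  have hsplit : Differentiable ℝ g ∧ ContDiff ℝ 1 (deriv g) :=
    ⟨hsplit0.1, hsplit0.2.2⟩
  have hd' : DifferentiableAt ℝ (deriv g) 0 :=
    (hsplit.2.differentiable one_ne_zero) 0
  have hOd : (fun x : ℝ => deriv g x) =O[nhds (0 : ℝ)] (fun x : ℝ => x) := by
    have := hd'.isBigO_sub
    simpa [h1] using this
  rcases hOd.exists_pos with ⟨C, hC, hbd⟩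
  rw [isBigOWith_iff] at hbd
  rw [Metric.eventually_nhds_iff] at hbd
  rcases hbd with ⟨r, hr, hball⟩
  rw [isBigO_iff]
  refine ⟨C, Metric.eventually_nhds_iff.2 ⟨r, hr, fun x hx => ?_⟩⟩
  -- mean value on segment between 0 and x
  have hseg : ∀ y ∈ segment ℝ (0 : ℝ) x, |y| ≤ |x| := by
    intro y hy
    rcases hy with ⟨a, b, ha, hb, hab, hy⟩
    have : y = b * x := by rw [← hy]; simp
    rw [this, abs_mul]
    have hb1 : b ≤ 1 := by linarith
    calc |b| * |x| = b * |x| := by rw [abs_of_nonneg hb]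
      _ ≤ 1 * |x| := by apply mul_le_mul_of_nonneg_right hb1 (abs_nonneg x)
      _ = |x| := one_mul _
  have hbound : ∀ y ∈ segment ℝ (0 : ℝ) x, ‖deriv g y‖ ≤ C * |x| := by
    intro y hy
    have hyx : |y| ≤ |x| := hseg y hy
    have hyr : dist y 0 < r := by
      rw [Real.dist_eq, sub_zero]
      calc |y| ≤ |x| := hyx
        _ < r := by simpa [Real.dist_eq, sub_zero] using hx
    have := hball hyr
    simp only [Real.norm_eq_abs] at this ⊢
    calc |deriv g y| ≤ C * |y| := this
      _ ≤ C * |x| := by apply mul_le_mul_of_nonneg_left hyx hC.le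
  have hdiff : ∀ y ∈ segment ℝ (0 : ℝ) x, DifferentiableAt ℝ g y :=
    fun y _ => (hsplit.1) y
  have := (convex_segment (0 : ℝ) x).norm_image_sub_le_of_norm_deriv_le hdiff hbound
    (left_mem_segment ℝ 0 x) (right_mem_segment ℝ 0 x)
  simp only [h0, sub_zero, Real.norm_eq_abs] at this
  calc ‖g x‖ = |g x| := rfl
    _ ≤ C * |x| * |x| := this
    _ = C * ‖x ^ 2‖ := by rw [Real.norm_eq_abs, abs_pow]; ring

/-- Lemma 1, first part: along any fixed noise sample path, the closed-loop perturbation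
state of the nonlinear system agrees with the perturbation state of its linearization up to
an `O(ε²)` error as the noise scale `ε → 0`, for every time `t ≤ T`. -/
theorem closed_loop_perturbation_isBigO_sq
    (T : ℕ) (A : ℕ → ℝ) (S : ℕ → ℝ → ℝ)
    (hS : ∀ t < T, ContDiff ℝ 2 (S t))
    (hS0 : ∀ t < T, S t 0 = 0)
    (hS1 : ∀ t < T, deriv (S t) 0 = 0)
    (w : ℕ → ℝ)
    (δx δxl : ℝ → ℕ → ℝ)
    (hx0 : ∀ ε, δx ε 0 = 0)
    (hx : ∀ ε, ∀ t < T, δx ε (t + 1) = A t * δx ε t + S t (δx ε t) + ε * w t)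
    (hl0 : ∀ ε, δxl ε 0 = 0)
    (hl : ∀ ε, ∀ t < T, δxl ε (t + 1) = A t * δxl ε t + ε * w t) :
    ∀ t ≤ T, (fun ε : ℝ => δx ε t - δxl ε t) =O[nhds (0 : ℝ)] (fun ε : ℝ => ε ^ 2) := by
  have hid : (fun ε : ℝ => ε) =O[nhds (0 : ℝ)] (fun _ : ℝ => (1 : ℝ)) :=
    (continuous_id.tendsto (0 : ℝ)).isBigO_one ℝ
  have key : ∀ t ≤ T,
      ((fun ε : ℝ => δx ε t) =O[nhds (0 : ℝ)] (fun ε : ℝ => ε)) ∧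
      ((fun ε : ℝ => δx ε t - δxl ε t) =O[nhds (0 : ℝ)] (fun ε : ℝ => ε ^ 2)) := by
    intro t
    induction t with
    | zero =>
      intro _
      constructor
      · have h : (fun ε : ℝ => δx ε 0) = fun _ : ℝ => (0 : ℝ) := funext fun ε => hx0 ε
        rw [h]; exact isBigO_zero _ _
      · have h : (fun ε : ℝ => δx ε 0 - δxl ε 0) = fun _ : ℝ => (0 : ℝ) :=
          funext fun ε => by rw [hx0, hl0, sub_zero]
        rw [h]; exact isBigO_zero _ _
    | succ t ih =>
      intro ht
      have htT : t < T := ht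
      obtain ⟨ih1, ih2⟩ := ih (le_of_lt htT)
      -- S term is O(ε²)
      have htend : Tendsto (fun ε : ℝ => δx ε t) (nhds 0) (nhds 0) :=
        ih1.trans_tendsto (by exact (continuous_id.tendsto (0:ℝ)))
      have hquad := quad_bigO (S t) (hS t htT) (hS0 t htT) (hS1 t htT)
      have hScomp : (fun ε : ℝ => S t (δx ε t)) =O[nhds (0:ℝ)]
          (fun ε : ℝ => (δx ε t) ^ 2) := hquad.comp_tendsto htend
      have hsq : (fun ε : ℝ => (δx ε t) ^ 2) =O[nhds (0:ℝ)] (fun ε : ℝ => ε ^ 2) := by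
        have := ih1.mul ih1
        simpa [sq] using this
      have hS2 : (fun ε : ℝ => S t (δx ε t)) =O[nhds (0:ℝ)] (fun ε : ℝ => ε ^ 2) :=
        hScomp.trans hsq
      have hsq_lin : (fun ε : ℝ => ε ^ 2) =O[nhds (0:ℝ)] (fun ε : ℝ => ε) := by
        have := hid.mul (isBigO_refl (fun ε : ℝ => ε) (nhds (0:ℝ)))
        simpa [sq] using this
      constructor
      · have : (fun ε : ℝ => δx ε (t+1)) = fun ε =>
            A t * δx ε t + S t (δx ε t) + ε * w t := by
          funext ε; exact hx ε t htT
        rw [this]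
        exact ((ih1.const_mul_left (A t)).add (hS2.trans hsq_lin)).add
          (((isBigO_refl (fun ε : ℝ => ε) _).const_mul_left (w t)).congr_left
            (fun ε => mul_comm (w t) ε))
      · have : (fun ε : ℝ => δx ε (t+1) - δxl ε (t+1)) = fun ε =>
            A t * (δx ε t - δxl ε t) + S t (δx ε t) := by
          funext ε; rw [hx ε t htT, hl ε t htT]; ring
        rw [this]
        exact (ih2.const_mul_left (A t)).add hS2
  intro t ht
  exact (key t ht).2
end

section
/- Assume additionally that each S̄_t is three times continuously differentiable, and define the second-order error sequence e^{(2)}_t(ε) by e^{(2)}_0(ε) = 0 and e^{(2)}_{t+1}(ε) = Ā_t e^{(2)}_t(ε) + (1/2) S̄_t″(0) (δx^l_t(ε))². Then for every t ≤ T, the function ε ↦ δx_t(ε) − δx^l_t(ε) − e^{(2)}_t(ε) is O(ε³) as ε → 0. (Lemma 1, second part: the nonlinear perturbation state equals the linear state plus an explicitly recursively computable quadratic correction, up to a third-order error in ε.) -/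
open Asymptotics Filter

lemma bigO_step {f : ℝ → ℝ} (hf : Differentiable ℝ f) (h0 : f 0 = 0) {n : ℕ}
    (hd : deriv f =O[nhds (0 : ℝ)] fun x => x ^ n) :
    f =O[nhds (0 : ℝ)] fun x => x ^ (n + 1) := by
  rw [isBigO_iff] at hd
  obtain ⟨C, hC⟩ := hd
  rw [Metric.eventually_nhds_iff] at hC
  obtain ⟨r, hr, hball⟩ := hC
  rw [isBigO_iff]
  refine ⟨|C|, ?_⟩
  rw [Metric.eventually_nhds_iff]
  refine ⟨r, hr, fun x hx => ?_⟩
  have hsub : ∀ y ∈ Set.uIcc (0:ℝ) x, ‖deriv f y‖ ≤ |C| * |x| ^ n := by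
    intro y hy
    have hyx : |y| ≤ |x| := by
      rcases Set.mem_uIcc.mp hy with ⟨h1, h2⟩ | ⟨h1, h2⟩
      · rw [abs_of_nonneg h1]; exact le_trans h2 (le_abs_self x)
      · rw [abs_of_nonpos h2]; exact le_trans (neg_le_neg h1) (neg_le_abs x)
    have hyr : dist y 0 < r := by
      rw [Real.dist_eq, sub_zero]
      rw [Real.dist_eq, sub_zero] at hx
      exact lt_of_le_of_lt hyx hx
    calc ‖deriv f y‖ ≤ C * ‖y ^ n‖ := hball hyr
      _ ≤ |C| * ‖y ^ n‖ := by
          exact mul_le_mul_of_nonneg_right (le_abs_self C) (norm_nonneg _)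
      _ ≤ |C| * |x| ^ n := by
          rw [Real.norm_eq_abs, abs_pow]
          exact mul_le_mul_of_nonneg_left (pow_le_pow_left₀ (abs_nonneg y) hyx n) (abs_nonneg C)
  have := (convex_uIcc (0:ℝ) x).norm_image_sub_le_of_norm_deriv_le
    (fun y _ => hf.differentiableAt) hsub
    (Set.left_mem_uIcc) (Set.right_mem_uIcc)
  rw [h0, sub_zero, sub_zero] at this
  calc ‖f x‖ ≤ |C| * |x| ^ n * ‖x‖ := this
    _ = |C| * ‖x ^ (n+1)‖ := by
        rw [Real.norm_eq_abs, Real.norm_eq_abs, abs_pow]; ring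

lemma taylorO : ∀ (n : ℕ) (f : ℝ → ℝ), ContDiff ℝ (n : WithTop ℕ∞) f →
    (∀ k < n, iteratedDeriv k f 0 = 0) → f =O[nhds (0 : ℝ)] fun x => x ^ n := by
  intro n
  induction n with
  | zero =>
    intro f hf _
    simpa using hf.continuous.continuousAt.tendsto.isBigO_one (F := ℝ)
  | succ n ih =>
    intro f hf h0
    have hcast : ((n + 1 : ℕ) : WithTop ℕ∞) = (n : WithTop ℕ∞) + 1 := by push_cast; rfl
    rw [hcast] at hf
    have hdiff : Differentiable ℝ f := (contDiff_succ_iff_deriv.mp hf).1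
    have hf' : ContDiff ℝ (n : WithTop ℕ∞) (deriv f) := (contDiff_succ_iff_deriv.mp hf).2.2
    have hd : deriv f =O[nhds (0 : ℝ)] fun x => x ^ n := by
      apply ih (deriv f) hf'
      intro k hk
      rw [← iteratedDeriv_succ']
      exact h0 (k + 1) (by omega)
    exact bigO_step hdiff (by simpa using h0 0 (by omega)) hd

private def linSeq (A w : ℕ → ℝ) : ℕ → ℝ
  | 0 => 0
  | t + 1 => A t * linSeq A w t + w t

/-- Lemma 1, second part: the nonlinear closed-loop perturbation state equals the linear
perturbation state plus the recursively computable quadratic correction `e²`, up to an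
`O(ε³)` error as the noise scale `ε → 0`, for every time `t ≤ T`. -/
theorem closed_loop_perturbation_quadratic_correction_isBigO_cube
    (T : ℕ) (A : ℕ → ℝ) (S : ℕ → ℝ → ℝ)
    (hS : ∀ t < T, ContDiff ℝ 3 (S t))
    (hS0 : ∀ t < T, S t 0 = 0)
    (hS1 : ∀ t < T, deriv (S t) 0 = 0)
    (w : ℕ → ℝ)
    (δx δxl e2 : ℝ → ℕ → ℝ)
    (hx0 : ∀ ε, δx ε 0 = 0)
    (hx : ∀ ε, ∀ t < T, δx ε (t + 1) = A t * δx ε t + S t (δx ε t) + ε * w t)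
    (hl0 : ∀ ε, δxl ε 0 = 0)
    (hl : ∀ ε, ∀ t < T, δxl ε (t + 1) = A t * δxl ε t + ε * w t)
    (he0 : ∀ ε, e2 ε 0 = 0)
    (he : ∀ ε, ∀ t < T, e2 ε (t + 1) =
      A t * e2 ε t + (1 / 2) * iteratedDeriv 2 (S t) 0 * (δxl ε t) ^ 2) :
    ∀ t ≤ T, (fun ε : ℝ => δx ε t - δxl ε t - e2 ε t)
      =O[nhds (0 : ℝ)] (fun ε : ℝ => ε ^ 3) := by
  set c : ℕ → ℝ := fun t => iteratedDeriv 2 (S t) 0 with hc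
  set L : ℕ → ℝ := linSeq A w with hL
  -- the linear sequence is exactly linear in ε
  have hLl : ∀ t ≤ T, ∀ ε : ℝ, δxl ε t = ε * L t := by
    intro t
    induction t with
    | zero => intro _ ε; simp [hl0, hL, linSeq]
    | succ t ih =>
      intro ht ε
      rw [hl ε t (by omega), ih (by omega) ε]
      simp only [hL, linSeq]
      ring
  -- O(ε) bound for the linear sequence
  have hδxlO : ∀ t ≤ T, (fun ε : ℝ => δxl ε t) =O[nhds (0:ℝ)] fun ε => ε := by
    intro t ht
    have heq : (fun ε : ℝ => δxl ε t) = fun ε => L t * ε := by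
      funext ε; rw [hLl t ht ε]; ring
    rw [heq]
    exact (isBigO_refl _ _).const_mul_left _
  -- quadratic Taylor bound for S t
  have hSO2 : ∀ t < T, (S t) =O[nhds (0:ℝ)] fun x => x ^ 2 := by
    intro t ht
    refine taylorO 2 (S t) ((hS t ht).of_le (by norm_num)) ?_
    intro k hk
    interval_cases k
    · simpa using hS0 t ht
    · simpa [iteratedDeriv_one] using hS1 t ht
  have hεsq : (fun ε : ℝ => ε ^ 2) =O[nhds (0:ℝ)] fun ε => ε := by
    have h1 : (fun ε : ℝ => ε) =O[nhds (0:ℝ)] (fun _ => (1:ℝ)) :=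
      (tendsto_id (x := nhds (0:ℝ))).isBigO_one (F := ℝ)
    have := h1.mul (isBigO_refl (fun ε : ℝ => ε) (nhds (0:ℝ)))
    simpa [pow_two] using this
  -- O(ε) bound for the nonlinear sequence
  have hδxO : ∀ t ≤ T, (fun ε : ℝ => δx ε t) =O[nhds (0:ℝ)] fun ε => ε := by
    intro t
    induction t with
    | zero => intro _; simpa [hx0] using (isBigO_zero (fun ε:ℝ => ε) (nhds (0:ℝ)) (E' := ℝ))
    | succ t ih =>
      intro ht
      have htT : t < T := by omega
      have hδ := ih (by omega)
      have htend : Tendsto (fun ε : ℝ => δx ε t) (nhds 0) (nhds 0) :=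
        hδ.trans_tendsto tendsto_id
      have hScomp : (fun ε : ℝ => S t (δx ε t)) =O[nhds (0:ℝ)] fun ε => (δx ε t) ^ 2 :=
        (hSO2 t htT).comp_tendsto htend
      have hS2 : (fun ε : ℝ => S t (δx ε t)) =O[nhds (0:ℝ)] fun ε => ε ^ 2 :=
        hScomp.trans (hδ.pow 2)
      have heq : (fun ε : ℝ => δx ε (t+1))
          = fun ε => A t * δx ε t + S t (δx ε t) + ε * w t := by
        funext ε; exact hx ε t htT
      rw [heq]
      have hw : (fun ε : ℝ => ε * w t) =O[nhds (0:ℝ)] fun ε => ε :=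
        ((isBigO_refl (fun ε:ℝ => ε) (nhds (0:ℝ))).const_mul_left (w t)).congr_left
          fun ε => mul_comm (w t) ε
      exact ((hδ.const_mul_left _).add (hS2.trans hεsq)).add hw
  -- O(ε²) bound for δx − δxl
  have hD2 : ∀ t ≤ T, (fun ε : ℝ => δx ε t - δxl ε t) =O[nhds (0:ℝ)] fun ε => ε ^ 2 := by
    intro t
    induction t with
    | zero => intro _; simpa [hx0, hl0] using (isBigO_zero (fun ε:ℝ => ε^2) (nhds (0:ℝ)) (E' := ℝ))
    | succ t ih =>
      intro ht
      have htT : t < T := by omega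
      have hδ := hδxO t (by omega)
      have htend : Tendsto (fun ε : ℝ => δx ε t) (nhds 0) (nhds 0) :=
        hδ.trans_tendsto tendsto_id
      have hS2 : (fun ε : ℝ => S t (δx ε t)) =O[nhds (0:ℝ)] fun ε => ε ^ 2 :=
        ((hSO2 t htT).comp_tendsto htend).trans (hδ.pow 2)
      have heq : (fun ε : ℝ => δx ε (t+1) - δxl ε (t+1))
          = fun ε => A t * (δx ε t - δxl ε t) + S t (δx ε t) := by
        funext ε; rw [hx ε t htT, hl ε t htT]; ring
      rw [heq]
      exact ((ih (by omega)).const_mul_left _).add hS2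
  -- main induction
  intro t
  induction t with
  | zero => intro _; simpa [hx0, hl0, he0] using (isBigO_zero (fun ε:ℝ => ε^3) (nhds (0:ℝ)) (E' := ℝ))
  | succ t ih =>
    intro ht
    have htT : t < T := by omega
    have ht' : t ≤ T := by omega
    have hδ := hδxO t ht'
    have htend : Tendsto (fun ε : ℝ => δx ε t) (nhds 0) (nhds 0) :=
      hδ.trans_tendsto tendsto_id
    -- cubic Taylor bound for remainder R x = S t x - (1/2) c t x²
    have hSd : Differentiable ℝ (S t) := (hS t htT).differentiable (by norm_num)
    have hS3 : ContDiff ℝ ((2:WithTop ℕ∞) + 1) (S t) := by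
      convert hS t htT using 2
      norm_num
    have hSd' : ContDiff ℝ (2 : WithTop ℕ∞) (deriv (S t)) :=
      (contDiff_succ_iff_deriv.mp hS3).2.2
    have hSdd : Differentiable ℝ (deriv (S t)) := hSd'.differentiable (by norm_num)
    have hR : (fun x : ℝ => S t x - (1/2) * c t * x ^ 2) =O[nhds (0:ℝ)] fun x => x ^ 3 := by
      refine taylorO 3 _ ?_ ?_
      · have : ContDiff ℝ ((3:ℕ) : WithTop ℕ∞) (fun x : ℝ => (1/2) * c t * x ^ 2) := by
          fun_prop
        exact ((hS t htT).of_le (by norm_num)).sub this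
      · intro k hk
        have hderivR : deriv (fun x : ℝ => S t x - (1/2) * c t * x ^ 2)
            = fun x => deriv (S t) x - c t * x := by
          funext x
          rw [deriv_fun_sub (hSd x) (by fun_prop)]
          congr 1
          rw [deriv_const_mul _ (by fun_prop), deriv_pow_field]
          ring
        interval_cases k
        · simpa using hS0 t htT
        · rw [iteratedDeriv_one, hderivR]
          simp [hS1 t htT]
        · rw [iteratedDeriv_succ, iteratedDeriv_one, hderivR]
          have : deriv (fun x : ℝ => deriv (S t) x - c t * x) 0
              = deriv (deriv (S t)) 0 - c t := by
            rw [deriv_fun_sub (hSdd 0) (by fun_prop)]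
            have hcm : deriv (fun x : ℝ => c t * x) 0 = c t := by
              rw [deriv_const_mul _ differentiable_id.differentiableAt]
              simp
            rw [show HMul.hMul (c t) = fun x : ℝ => c t * x from rfl, hcm]
          rw [this]
          have h2 : deriv (deriv (S t)) 0 = iteratedDeriv 2 (S t) 0 := by
            rw [iteratedDeriv_succ, iteratedDeriv_one]
          rw [h2, hc]
          ring
    have hRcomp : (fun ε : ℝ => S t (δx ε t) - (1/2) * c t * (δx ε t) ^ 2)
        =O[nhds (0:ℝ)] fun ε => ε ^ 3 :=
      (hR.comp_tendsto htend).trans (hδ.pow 3)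
    have hmul : (fun ε : ℝ => (δx ε t - δxl ε t) * (δx ε t + δxl ε t))
        =O[nhds (0:ℝ)] fun ε => ε ^ 2 * ε :=
      (hD2 t ht').mul (hδ.add (hδxlO t ht'))
    have hcube : (fun ε : ℝ => ε ^ 2 * ε) = fun ε : ℝ => ε ^ 3 := by
      funext ε; ring
    rw [hcube] at hmul
    have heq : (fun ε : ℝ => δx ε (t+1) - δxl ε (t+1) - e2 ε (t+1))
        = fun ε => A t * (δx ε t - δxl ε t - e2 ε t)
            + (S t (δx ε t) - (1/2) * c t * (δx ε t) ^ 2)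
            + (1/2) * c t * ((δx ε t - δxl ε t) * (δx ε t + δxl ε t)) := by
      funext ε
      rw [hx ε t htT, hl ε t htT, he ε t htT, hc]
      ring
    rw [heq]
    exact (((ih ht').const_mul_left _).add hRcomp).add (hmul.const_mul_left _)
end

section
/- Along any fixed noise sample path, the closed-loop cost satisfies J(ε) = J̄ + δJ1(ε) + δJ2(ε) + O(ε³) as ε → 0; that is, the function ε ↦ J(ε) − J̄ − δJ1(ε) − δJ2(ε) is O(ε³) in the neighborhood filter of 0. (Lemma 2: the sample-path cost decomposes into the nominal cost, a first-order term determined solely by the linear closed-loop system, and a second-order term determined by the linear states and the quadratic correction e^{(2)}, up to O(ε³).) -/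
open Asymptotics Filter


/-- Pow comparison near 0. -/
lemma pow_isBigO_pow_nhds {n m : ℕ} (h : n ≤ m) :
    (fun x : ℝ => x ^ m) =O[nhds (0:ℝ)] fun x => x ^ n := by
  rw [isBigO_iff]
  refine ⟨1, ?_⟩
  have : ∀ᶠ x : ℝ in nhds 0, |x| ≤ 1 :=
    Filter.eventually_of_mem (Metric.closedBall_mem_nhds (0:ℝ) one_pos)
      (fun x hx => by simpa [Real.dist_eq] using hx)
  filter_upwards [this] with x hx
  simp only [norm_pow, Real.norm_eq_abs, one_mul]
  exact pow_le_pow_of_le_one (abs_nonneg x) hx h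

/-- From derivative `O(x^n)` to function `O(x^(n+1))` near 0, by MVT. -/
lemma isBigO_of_deriv_isBigO {φ : ℝ → ℝ} {n : ℕ} (hφ : Differentiable ℝ φ)
    (h0 : φ 0 = 0) (hd : deriv φ =O[nhds (0:ℝ)] fun x => x ^ n) :
    φ =O[nhds (0:ℝ)] fun x => x ^ (n + 1) := by
  obtain ⟨Cb, hCb0, hCb⟩ := hd.exists_nonneg
  rw [IsBigOWith, Metric.eventually_nhds_iff] at hCb
  obtain ⟨δ, hδ, hball⟩ := hCb
  rw [isBigO_iff]
  refine ⟨Cb, ?_⟩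
  rw [Metric.eventually_nhds_iff]
  refine ⟨δ, hδ, fun x hx => ?_⟩
  have hxd : |x| < δ := by simpa [Real.dist_eq] using hx
  have key : ‖φ x - φ 0‖ ≤ (Cb * |x| ^ n) * ‖x - 0‖ := by
    refine Convex.norm_image_sub_le_of_norm_deriv_le (fun y _ => hφ y) ?_
      (convex_closedBall (0:ℝ) |x|) ?_ ?_
    · intro y hy
      have hy' : |y| ≤ |x| := by simpa [Real.dist_eq] using hy
      have : ‖deriv φ y‖ ≤ Cb * ‖y ^ n‖ := by
        apply hball
        simp only [Real.dist_eq, sub_zero]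
        exact lt_of_le_of_lt hy' hxd
      refine this.trans ?_
      gcongr
      simpa [abs_pow] using pow_le_pow_left₀ (abs_nonneg y) hy' n
    · simp only [Metric.mem_closedBall, Real.dist_eq, sub_zero]
      simpa using abs_nonneg x
    · simp [Real.dist_eq]
  rw [h0, sub_zero, sub_zero] at key
  calc ‖φ x‖ ≤ (Cb * |x| ^ n) * ‖x‖ := key
    _ = Cb * ‖x ^ (n+1)‖ := by
        simp [abs_pow, Real.norm_eq_abs, pow_succ]; ring

/-- Second order Taylor bound: `f x - ½ f''(0) x² = O(x³)` near 0. -/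
lemma taylor2_isBigO {f : ℝ → ℝ} (hf : ContDiff ℝ 3 f)
    (h0 : f 0 = 0) (h1 : deriv f 0 = 0) :
    (fun x => f x - (1/2) * iteratedDeriv 2 f 0 * x ^ 2)
      =O[nhds (0:ℝ)] fun x => x ^ 3 := by
  set c := iteratedDeriv 2 f 0 with hc
  have hcd : c = deriv (deriv f) 0 := by
    rw [hc, iteratedDeriv_succ, iteratedDeriv_one]
  have hfd : Differentiable ℝ f := hf.differentiable (by norm_num)
  have hf' : ContDiff ℝ 2 (deriv f) :=
    (contDiff_succ_iff_deriv.mp (show ContDiff ℝ (2+1) f by exact_mod_cast hf)).2.2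
  have hf'd : Differentiable ℝ (deriv f) := hf'.differentiable (by norm_num)
  have hf'' : ContDiff ℝ 1 (deriv (deriv f)) :=
    (contDiff_succ_iff_deriv.mp (show ContDiff ℝ (1+1) (deriv f) by exact_mod_cast hf')).2.2
  have hf''d : Differentiable ℝ (deriv (deriv f)) := hf''.differentiable (by norm_num)
  -- g and its derivatives
  set g : ℝ → ℝ := fun x => f x - (1/2) * c * x ^ 2 with hg
  have hgd : Differentiable ℝ g := hfd.sub (by fun_prop)
  have hg' : deriv g = fun x => deriv f x - c * x := by
    funext x
    have h2 : HasDerivAt (fun x : ℝ => (1/2) * c * x ^ 2) (c * x) x := by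
      have := (hasDerivAt_pow 2 x).const_mul ((1/2) * c)
      refine this.congr_deriv ?_
      norm_num; ring
    exact ((hfd x).hasDerivAt.sub h2).deriv
  have hg'd : Differentiable ℝ (fun x => deriv f x - c * x) :=
    hf'd.sub (by fun_prop)
  have hg'' : deriv (fun x => deriv f x - c * x) = fun x => deriv (deriv f) x - c := by
    funext x
    have h2 : HasDerivAt (fun x : ℝ => c * x) c x := by
      simpa using (hasDerivAt_id x).const_mul c
    exact ((hf'd x).hasDerivAt.sub h2).deriv
  -- second derivative is O(x)
  have step1 : (fun x => deriv (deriv f) x - c) =O[nhds (0:ℝ)] fun x => x ^ 1 := by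
    have := (hf''d 0).isBigO_sub
    simp only [sub_zero] at this
    rw [← hcd] at this
    simpa using this
  have step2 : (fun x => deriv f x - c * x) =O[nhds (0:ℝ)] fun x => x ^ 2 := by
    have := isBigO_of_deriv_isBigO (n := 1) hg'd (by simp [h1]) (hg'' ▸ step1)
    simpa using this
  have step3 : g =O[nhds (0:ℝ)] fun x => x ^ 3 := by
    have := isBigO_of_deriv_isBigO (n := 2) hgd (by simp [hg, h0]) (hg' ▸ step2)
    simpa using this
  exact step3

/-- Quadratic bound: `f = O(x²)` near 0. -/
lemma quad_isBigO {f : ℝ → ℝ} (hf : ContDiff ℝ 3 f)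
    (h0 : f 0 = 0) (h1 : deriv f 0 = 0) :
    f =O[nhds (0:ℝ)] fun x => x ^ 2 := by
  have h := taylor2_isBigO hf h0 h1
  have h3 : (fun x : ℝ => x ^ 3) =O[nhds (0:ℝ)] fun x => x ^ 2 :=
    pow_isBigO_pow_nhds (by norm_num)
  have h2 : (fun x : ℝ => (1/2) * iteratedDeriv 2 f 0 * x ^ 2)
      =O[nhds (0:ℝ)] fun x => x ^ 2 :=
    (isBigO_refl (fun x : ℝ => x ^ 2) _).const_mul_left _
  have := (h.trans h3).add h2
  simpa using this

/-- Lemma 2: along any fixed noise sample path, the closed-loop cost decomposes as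
`J(ε) = J̄ + δJ1(ε) + δJ2(ε) + O(ε³)` as `ε → 0`, where `J̄` is the nominal cost, `δJ1` is
the first-order cost perturbation of the linear closed loop, and `δJ2` is the second-order
cost perturbation built from the linear states and the quadratic correction `e²`. -/
theorem sample_path_cost_decomposition_isBigO_cube
    (T : ℕ) (A : ℕ → ℝ) (S : ℕ → ℝ → ℝ)
    (hS : ∀ t < T, ContDiff ℝ 3 (S t))
    (hS0 : ∀ t < T, S t 0 = 0)
    (hS1 : ∀ t < T, deriv (S t) 0 = 0)
    (w : ℕ → ℝ)
    (δx δxl e2 : ℝ → ℕ → ℝ)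
    (hx0 : ∀ ε, δx ε 0 = 0)
    (hx : ∀ ε, ∀ t < T, δx ε (t + 1) = A t * δx ε t + S t (δx ε t) + ε * w t)
    (hl0 : ∀ ε, δxl ε 0 = 0)
    (hl : ∀ ε, ∀ t < T, δxl ε (t + 1) = A t * δxl ε t + ε * w t)
    (he0 : ∀ ε, e2 ε 0 = 0)
    (he : ∀ ε, ∀ t < T, e2 ε (t + 1) =
      A t * e2 ε t + (1 / 2) * iteratedDeriv 2 (S t) 0 * (δxl ε t) ^ 2)
    (c C : ℕ → ℝ) (H : ℕ → ℝ → ℝ)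
    (hH : ∀ t ≤ T, ContDiff ℝ 3 (H t))
    (hH0 : ∀ t ≤ T, H t 0 = 0)
    (hH1 : ∀ t ≤ T, deriv (H t) 0 = 0) :
    (fun ε : ℝ =>
        (∑ t ∈ Finset.range (T + 1), (c t + C t * δx ε t + H t (δx ε t)))
        - (∑ t ∈ Finset.range (T + 1), c t)
        - (∑ t ∈ Finset.range (T + 1), C t * δxl ε t)
        - (∑ t ∈ Finset.range (T + 1),
            ((1 / 2) * iteratedDeriv 2 (H t) 0 * (δxl ε t) ^ 2 + C t * e2 ε t)))
      =O[nhds (0 : ℝ)] (fun ε : ℝ => ε ^ 3) := by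

  -- abbreviations
  have hεO : (fun ε : ℝ => ε) =O[nhds (0:ℝ)] fun ε => ε := isBigO_refl _ _
  have h21 : (fun ε : ℝ => ε ^ 2) =O[nhds (0:ℝ)] fun ε => ε := by
    simpa using pow_isBigO_pow_nhds (n := 1) (m := 2) (by norm_num)
  -- linear states are O(ε)
  have h1 : ∀ t ≤ T, (fun ε => δxl ε t) =O[nhds (0:ℝ)] fun ε => ε := by
    intro t
    induction t with
    | zero => intro _; simp only [hl0]; exact isBigO_zero _ _
    | succ t ih =>
      intro ht
      have htT : t < T := ht
      have ihh := ih (le_of_lt htT)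
      have : (fun ε => A t * δxl ε t + ε * w t) =O[nhds (0:ℝ)] fun ε => ε := by
        refine (ihh.const_mul_left (A t)).add ?_
        simpa [mul_comm] using hεO.const_mul_left (w t)
      exact this.congr_left fun ε => (hl ε t htT).symm
  -- closed-loop states are O(ε)
  have h2 : ∀ t ≤ T, (fun ε => δx ε t) =O[nhds (0:ℝ)] fun ε => ε := by
    intro t
    induction t with
    | zero => intro _; simp only [hx0]; exact isBigO_zero _ _
    | succ t ih =>
      intro ht
      have htT : t < T := ht
      have ihh := ih (le_of_lt htT)
      have htend : Filter.Tendsto (fun ε => δx ε t) (nhds (0:ℝ)) (nhds (0:ℝ)) :=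
        ihh.trans_tendsto tendsto_id
      have hScomp : (fun ε => S t (δx ε t)) =O[nhds (0:ℝ)] fun ε => ε := by
        have := (quad_isBigO (hS t htT) (hS0 t htT) (hS1 t htT)).comp_tendsto htend
        exact (this.trans (ihh.pow 2)).trans h21
      have : (fun ε => A t * δx ε t + S t (δx ε t) + ε * w t)
          =O[nhds (0:ℝ)] fun ε => ε := by
        refine ((ihh.const_mul_left (A t)).add hScomp).add ?_
        simpa [mul_comm] using hεO.const_mul_left (w t)
      exact this.congr_left fun ε => (hx ε t htT).symm
  -- difference is O(ε²)
  have h3 : ∀ t ≤ T, (fun ε => δx ε t - δxl ε t) =O[nhds (0:ℝ)] fun ε => ε ^ 2 := by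
    intro t
    induction t with
    | zero => intro _; simp only [hx0, hl0, sub_self]; exact isBigO_zero _ _
    | succ t ih =>
      intro ht
      have htT : t < T := ht
      have ihh := ih (le_of_lt htT)
      have htend : Filter.Tendsto (fun ε => δx ε t) (nhds (0:ℝ)) (nhds (0:ℝ)) :=
        (h2 t (le_of_lt htT)).trans_tendsto tendsto_id
      have hScomp : (fun ε => S t (δx ε t)) =O[nhds (0:ℝ)] fun ε => ε ^ 2 := by
        have := (quad_isBigO (hS t htT) (hS0 t htT) (hS1 t htT)).comp_tendsto htend
        exact this.trans ((h2 t (le_of_lt htT)).pow 2)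
      have : (fun ε => A t * (δx ε t - δxl ε t) + S t (δx ε t))
          =O[nhds (0:ℝ)] fun ε => ε ^ 2 :=
        (ihh.const_mul_left (A t)).add hScomp
      refine this.congr_left fun ε => ?_
      rw [hx ε t htT, hl ε t htT]; ring
  -- third-order difference is O(ε³)
  have h4 : ∀ t ≤ T,
      (fun ε => δx ε t - δxl ε t - e2 ε t) =O[nhds (0:ℝ)] fun ε => ε ^ 3 := by
    intro t
    induction t with
    | zero => intro _; simp only [hx0, hl0, he0, sub_self]; exact isBigO_zero _ _
    | succ t ih =>
      intro ht
      have htT : t < T := ht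
      have htT' := le_of_lt htT
      have ihh := ih htT'
      have htend : Filter.Tendsto (fun ε => δx ε t) (nhds (0:ℝ)) (nhds (0:ℝ)) :=
        (h2 t htT').trans_tendsto tendsto_id
      have hTay : (fun ε => S t (δx ε t)
            - (1/2) * iteratedDeriv 2 (S t) 0 * (δx ε t) ^ 2)
          =O[nhds (0:ℝ)] fun ε => ε ^ 3 := by
        have := (taylor2_isBigO (hS t htT) (hS0 t htT) (hS1 t htT)).comp_tendsto htend
        exact this.trans ((h2 t htT').pow 3)
      have hsq : (fun ε => (1/2) * iteratedDeriv 2 (S t) 0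
            * ((δx ε t) ^ 2 - (δxl ε t) ^ 2)) =O[nhds (0:ℝ)] fun ε => ε ^ 3 := by
        have hmul := (h3 t htT').mul ((h2 t htT').add (h1 t htT'))
        have : (fun ε => (δx ε t) ^ 2 - (δxl ε t) ^ 2)
            =O[nhds (0:ℝ)] fun ε => ε ^ 3 := by
          have heq1 : (fun ε : ℝ => (δx ε t) ^ 2 - (δxl ε t) ^ 2)
              = fun ε => (δx ε t - δxl ε t) * (δx ε t + δxl ε t) := by
            funext ε; ring
          have heq2 : (fun ε : ℝ => ε ^ 3) = fun ε => ε ^ 2 * ε := by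
            funext ε; ring
          rw [heq1, heq2]; exact hmul
        exact this.const_mul_left _
      have : (fun ε => A t * (δx ε t - δxl ε t - e2 ε t)
            + (S t (δx ε t) - (1/2) * iteratedDeriv 2 (S t) 0 * (δx ε t) ^ 2)
            + (1/2) * iteratedDeriv 2 (S t) 0 * ((δx ε t) ^ 2 - (δxl ε t) ^ 2))
          =O[nhds (0:ℝ)] fun ε => ε ^ 3 :=
        ((ihh.const_mul_left (A t)).add hTay).add hsq
      refine this.congr_left fun ε => ?_
      rw [hx ε t htT, hl ε t htT, he ε t htT]; ring
  -- per-term estimate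
  have hterm : ∀ t ≤ T,
      (fun ε => (c t + C t * δx ε t + H t (δx ε t)) - c t - C t * δxl ε t
        - ((1/2) * iteratedDeriv 2 (H t) 0 * (δxl ε t) ^ 2 + C t * e2 ε t))
      =O[nhds (0:ℝ)] fun ε => ε ^ 3 := by
    intro t ht
    have htend : Filter.Tendsto (fun ε => δx ε t) (nhds (0:ℝ)) (nhds (0:ℝ)) :=
      (h2 t ht).trans_tendsto tendsto_id
    have a1 : (fun ε => C t * (δx ε t - δxl ε t - e2 ε t))
        =O[nhds (0:ℝ)] fun ε => ε ^ 3 := (h4 t ht).const_mul_left _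
    have a2 : (fun ε => H t (δx ε t)
          - (1/2) * iteratedDeriv 2 (H t) 0 * (δx ε t) ^ 2)
        =O[nhds (0:ℝ)] fun ε => ε ^ 3 := by
      have := (taylor2_isBigO (hH t ht) (hH0 t ht) (hH1 t ht)).comp_tendsto htend
      exact this.trans ((h2 t ht).pow 3)
    have a3 : (fun ε => (1/2) * iteratedDeriv 2 (H t) 0
          * ((δx ε t) ^ 2 - (δxl ε t) ^ 2)) =O[nhds (0:ℝ)] fun ε => ε ^ 3 := by
      have hmul := (h3 t ht).mul ((h2 t ht).add (h1 t ht))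
      have : (fun ε => (δx ε t) ^ 2 - (δxl ε t) ^ 2)
          =O[nhds (0:ℝ)] fun ε => ε ^ 3 := by
        have heq1 : (fun ε : ℝ => (δx ε t) ^ 2 - (δxl ε t) ^ 2)
            = fun ε => (δx ε t - δxl ε t) * (δx ε t + δxl ε t) := by
          funext ε; ring
        have heq2 : (fun ε : ℝ => ε ^ 3) = fun ε => ε ^ 2 * ε := by
          funext ε; ring
        rw [heq1, heq2]; exact hmul
      exact this.const_mul_left _
    have := (a1.add a2).add a3
    refine this.congr_left fun ε => ?_
    ring
  -- combine over the sum
  have hsum : (fun ε => ∑ t ∈ Finset.range (T + 1),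
      ((c t + C t * δx ε t + H t (δx ε t)) - c t - C t * δxl ε t
        - ((1/2) * iteratedDeriv 2 (H t) 0 * (δxl ε t) ^ 2 + C t * e2 ε t)))
      =O[nhds (0:ℝ)] fun ε => ε ^ 3 := by
    refine (Asymptotics.IsBigO.sum (s := Finset.range (T + 1)) (A := fun t ε =>
      ((c t + C t * δx ε t + H t (δx ε t)) - c t - C t * δxl ε t
        - ((1/2) * iteratedDeriv 2 (H t) 0 * (δxl ε t) ^ 2 + C t * e2 ε t)))
      fun t htmem => ?_).congr_left fun ε => Finset.sum_apply _ _ _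
    exact hterm t (Nat.lt_succ_iff.mp (Finset.mem_range.mp htmem))
  refine hsum.congr_left fun ε => ?_
  rw [← Finset.sum_sub_distrib, ← Finset.sum_sub_distrib, ← Finset.sum_sub_distrib]
end

section
/- If the noise values w_0,…,w_{T−1} are independent real random variables on a probability space, each with zero mean and almost surely bounded by a common constant, then the expected closed-loop cost satisfies E[J(ε)] = J̄ + O(ε²) as ε → 0; that is, ε ↦ E[J(ε)] − J̄ is O(ε²) in the neighborhood filter of 0. (Theorem 1, mean part: the expected cost under a smooth feedback policy is determined, up to second order in the noise scale ε, solely by the nominal (noise-free) cost.) -/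
open Asymptotics Filter MeasureTheory

lemma quad_bound (f : ℝ → ℝ) (hf : ContDiff ℝ 3 f) (h0 : f 0 = 0) (h1 : deriv f 0 = 0) :
    ∃ K, 0 ≤ K ∧ ∀ x : ℝ, |x| ≤ 1 → |f x| ≤ K * x ^ 2 := by
  have hf2 : ContDiff ℝ 2 f := hf.of_le (by norm_num)
  have hg : ContDiff ℝ 1 (deriv f) := ((contDiff_succ_iff_deriv (n := 1)).mp hf2).2.2
  have hgc : Continuous (deriv (deriv f)) := hg.continuous_deriv le_rfl
  obtain ⟨K0, hK0⟩ := (isCompact_Icc (a := (-1:ℝ)) (b := 1)).exists_bound_of_continuousOn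
    hgc.continuousOn
  set K := max K0 0 with hKdef
  have hKnn : 0 ≤ K := le_max_right _ _
  have hbound : ∀ y ∈ Set.Icc (-1:ℝ) 1, ‖deriv (deriv f) y‖ ≤ K :=
    fun y hy => (hK0 y hy).trans (le_max_left _ _)
  have hderiv : ∀ y : ℝ, |y| ≤ 1 → |deriv f y| ≤ K * |y| := by
    intro y hy
    have hmem : y ∈ Set.Icc (-1:ℝ) 1 := abs_le.mp hy
    have h0mem : (0:ℝ) ∈ Set.Icc (-1:ℝ) 1 := by norm_num
    have := (convex_Icc (-1:ℝ) 1).norm_image_sub_le_of_norm_deriv_le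
      (fun x hx => (hg.differentiable one_ne_zero).differentiableAt) hbound h0mem hmem
    simpa [h1, Real.norm_eq_abs] using this
  refine ⟨K, hKnn, fun x hx => ?_⟩
  have hbd2 : ∀ y ∈ Set.Icc (-|x|) (|x|), ‖deriv f y‖ ≤ K * |x| := by
    intro y hy
    have : |y| ≤ |x| := abs_le.mpr hy
    calc ‖deriv f y‖ ≤ K * |y| := hderiv y (this.trans hx)
    _ ≤ K * |x| := by nlinarith
  have hxmem : x ∈ Set.Icc (-|x|) (|x|) := ⟨neg_abs_le x, le_abs_self x⟩
  have h0mem : (0:ℝ) ∈ Set.Icc (-|x|) (|x|) := ⟨neg_nonpos.mpr (abs_nonneg x), abs_nonneg x⟩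
  have := (convex_Icc (-|x|) (|x|)).norm_image_sub_le_of_norm_deriv_le
    (fun z hz => (hf.differentiable (by norm_num)).differentiableAt) hbd2 h0mem hxmem
  have h2 : |f x| ≤ K * |x| * |x| := by simpa [h0, Real.norm_eq_abs] using this
  calc |f x| ≤ K * |x| * |x| := h2
  _ = K * x ^ 2 := by rw [mul_assoc, ← abs_mul, ← sq, abs_pow, sq_abs]

lemma int_of_bound {Ω : Type*} [MeasurableSpace Ω] {μ : Measure Ω} [IsProbabilityMeasure μ]
    {f : Ω → ℝ} (hm : Measurable f) {b : ℝ} (hb : ∀ᵐ ω ∂μ, |f ω| ≤ b) : Integrable f μ :=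
  (integrable_const b).mono' hm.aestronglyMeasurable (by simpa [Real.norm_eq_abs] using hb)

lemma abs_int_le {Ω : Type*} [MeasurableSpace Ω] {μ : Measure Ω} [IsProbabilityMeasure μ]
    {f : Ω → ℝ} {b : ℝ} (hb : ∀ᵐ ω ∂μ, |f ω| ≤ b) : |∫ ω, f ω ∂μ| ≤ b := by
  have := norm_integral_le_of_norm_le_const (μ := μ) (f := f) (C := b)
    (by simpa [Real.norm_eq_abs] using hb)
  simpa [Real.norm_eq_abs, measure_univ] using this


/-- Theorem 1, mean part: for independent, zero-mean, a.s. uniformly bounded noises, the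
expected closed-loop cost satisfies `E[J(ε)] = J̄ + O(ε²)` as `ε → 0`; the expected cost is
determined up to second order in `ε` solely by the nominal (noise-free) cost. -/
theorem expected_cost_eq_nominal_add_isBigO_sq
    {Ω : Type*} [MeasurableSpace Ω] (μ : Measure Ω) [IsProbabilityMeasure μ]
    (T : ℕ) (A : ℕ → ℝ) (S : ℕ → ℝ → ℝ)
    (hS : ∀ t < T, ContDiff ℝ 3 (S t))
    (hS0 : ∀ t < T, S t 0 = 0)
    (hS1 : ∀ t < T, deriv (S t) 0 = 0)
    (w : ℕ → Ω → ℝ) (hmeas : ∀ t < T, Measurable (w t))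
    (hindep : ProbabilityTheory.iIndepFun (fun t : Fin T => w t) μ)
    (hmean : ∀ t < T, ∫ ω, w t ω ∂μ = 0)
    (Cbd : ℝ) (hbd : ∀ t < T, ∀ᵐ ω ∂μ, |w t ω| ≤ Cbd)
    (δx : ℝ → ℕ → Ω → ℝ)
    (hx0 : ∀ ε ω, δx ε 0 ω = 0)
    (hx : ∀ ε, ∀ t < T, ∀ ω, δx ε (t + 1) ω = A t * δx ε t ω + S t (δx ε t ω) + ε * w t ω)
    (c C : ℕ → ℝ) (H : ℕ → ℝ → ℝ)
    (hH : ∀ t ≤ T, ContDiff ℝ 3 (H t))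
    (hH0 : ∀ t ≤ T, H t 0 = 0)
    (hH1 : ∀ t ≤ T, deriv (H t) 0 = 0) :
    (fun ε : ℝ =>
        (∫ ω, (∑ t ∈ Finset.range (T + 1), (c t + C t * δx ε t ω + H t (δx ε t ω))) ∂μ)
        - ∑ t ∈ Finset.range (T + 1), c t)
      =O[nhds (0 : ℝ)] (fun ε : ℝ => ε ^ 2) := by
  -- Nonnegative uniform noise bound
  set B := max Cbd 0 with hBdef
  have hB : 0 ≤ B := le_max_right _ _
  have hbdB : ∀ t < T, ∀ᵐ ω ∂μ, |w t ω| ≤ B := fun t ht => by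
    filter_upwards [hbd t ht] with ω h using h.trans (le_max_left _ _)
  -- quadratic bounds for S and H
  have hSq : ∀ t, ∃ K, 0 ≤ K ∧ (t < T → ∀ x : ℝ, |x| ≤ 1 → |S t x| ≤ K * x ^ 2) := by
    intro t
    by_cases ht : t < T
    · obtain ⟨K, h1, h2⟩ := quad_bound (S t) (hS t ht) (hS0 t ht) (hS1 t ht)
      exact ⟨K, h1, fun _ => h2⟩
    · exact ⟨0, le_rfl, fun h => absurd h ht⟩
  choose KS hKS0 hKSb using hSq
  have hHq : ∀ t, ∃ K, 0 ≤ K ∧ (t ≤ T → ∀ x : ℝ, |x| ≤ 1 → |H t x| ≤ K * x ^ 2) := by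
    intro t
    by_cases ht : t ≤ T
    · obtain ⟨K, h1, h2⟩ := quad_bound (H t) (hH t ht) (hH0 t ht) (hH1 t ht)
      exact ⟨K, h1, fun _ => h2⟩
    · exact ⟨0, le_rfl, fun h => absurd h ht⟩
  choose KH hKH0 hKHb using hHq
  -- measurability
  have hmeasx : ∀ ε : ℝ, ∀ t, t ≤ T → Measurable (δx ε t) := by
    intro ε t
    induction t with
    | zero =>
      intro _
      have : δx ε 0 = fun _ => (0:ℝ) := funext (hx0 ε)
      rw [this]; exact measurable_const
    | succ t ih =>
      intro h
      have ht : t < T := h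
      have hmt := ih ht.le
      have : δx ε (t+1) = fun ω => A t * δx ε t ω + S t (δx ε t ω) + ε * w t ω :=
        funext (hx ε t ht)
      rw [this]
      exact ((measurable_const.mul hmt).add
        ((hS t ht).continuous.measurable.comp hmt)).add (measurable_const.mul (hmeas t ht))
  -- a.s. linear bound on δx
  have hP : ∀ t, ∃ M : ℝ, 0 < M ∧ (t ≤ T → ∀ ε : ℝ, |ε| * M ≤ 1 →
      ∀ᵐ ω ∂μ, |δx ε t ω| ≤ M * |ε|) := by
    intro t
    induction t with
    | zero =>
      refine ⟨1, one_pos, fun _ ε _ => Eventually.of_forall fun ω => ?_⟩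
      rw [hx0]; simp [abs_nonneg]
    | succ t ih =>
      obtain ⟨M, hM0, hPM⟩ := ih
      by_cases h : t + 1 ≤ T
      · have ht : t < T := h
        refine ⟨(|A t| + KS t + 1) * M + B + 1,
          by nlinarith [abs_nonneg (A t), hKS0 t], fun _ ε hε => ?_⟩
        have hMle : M ≤ (|A t| + KS t + 1) * M + B + 1 := by
          nlinarith [abs_nonneg (A t), hKS0 t]
        have hε' : |ε| * M ≤ 1 := by nlinarith [abs_nonneg ε]
        filter_upwards [hPM ht.le ε hε', hbdB t ht] with ω h1 h2
        rw [hx ε t ht]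
        have htri : |A t * δx ε t ω + S t (δx ε t ω) + ε * w t ω| ≤
            |A t| * |δx ε t ω| + |S t (δx ε t ω)| + |ε| * |w t ω| := by
          calc |A t * δx ε t ω + S t (δx ε t ω) + ε * w t ω|
              ≤ |A t * δx ε t ω + S t (δx ε t ω)| + |ε * w t ω| := abs_add_le _ _
          _ ≤ |A t * δx ε t ω| + |S t (δx ε t ω)| + |ε * w t ω| := by
              gcongr; exact abs_add_le _ _
          _ = |A t| * |δx ε t ω| + |S t (δx ε t ω)| + |ε| * |w t ω| := by
              rw [abs_mul, abs_mul]
        have hδ1 : |δx ε t ω| ≤ 1 := by nlinarith [abs_nonneg ε]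
        have hSb := hKSb t ht _ hδ1
        have hsq : (δx ε t ω) ^ 2 ≤ (M * |ε|) ^ 2 := by
          have := sq_abs (δx ε t ω)
          nlinarith [abs_nonneg (δx ε t ω)]
        have e0 : 0 ≤ M * |ε| := mul_nonneg hM0.le (abs_nonneg ε)
        have hMε : M * |ε| ≤ 1 := by rw [mul_comm]; exact hε'
        have hS2 : |S t (δx ε t ω)| ≤ KS t * (M * |ε|) := by
          calc |S t (δx ε t ω)| ≤ KS t * (δx ε t ω) ^ 2 := hSb
          _ ≤ KS t * (M * |ε|) ^ 2 := mul_le_mul_of_nonneg_left hsq (hKS0 t)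
          _ ≤ KS t * (M * |ε|) := by nlinarith [mul_nonneg (hKS0 t) e0]
        have hA2 : |A t| * |δx ε t ω| ≤ |A t| * (M * |ε|) :=
          mul_le_mul_of_nonneg_left h1 (abs_nonneg _)
        have hw2 : |ε| * |w t ω| ≤ |ε| * B := mul_le_mul_of_nonneg_left h2 (abs_nonneg ε)
        nlinarith [abs_nonneg ε]
      · exact ⟨1, one_pos, fun h' => absurd h' h⟩
  choose M hM0 hMP using hP
  have hev1 : ∀ t, ∀ᶠ ε : ℝ in nhds 0, |ε| * M t ≤ 1 := by
    intro t
    have hMt := hM0 t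
    filter_upwards [Metric.ball_mem_nhds (0:ℝ) (show 0 < 1 / M t by positivity)] with ε hε
    rw [Metric.mem_ball, Real.dist_eq, sub_zero] at hε
    exact ((lt_div_iff₀ hMt).mp hε).le
  -- a.e. quadratic bound on H ∘ δx
  have haeHb : ∀ t, t ≤ T → ∀ ε : ℝ, |ε| * M t ≤ 1 →
      ∀ᵐ ω ∂μ, |H t (δx ε t ω)| ≤ KH t * (M t) ^ 2 * ε ^ 2 := by
    intro t ht ε hε
    have hMε : M t * |ε| ≤ 1 := by rw [mul_comm]; exact hε
    filter_upwards [hMP t ht ε hε] with ω h1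
    have hδ1 : |δx ε t ω| ≤ 1 := h1.trans hMε
    have hsq : (δx ε t ω) ^ 2 ≤ (M t) ^ 2 * ε ^ 2 := by
      have e1 := sq_abs (δx ε t ω)
      have e2 := sq_abs ε
      nlinarith [abs_nonneg (δx ε t ω), abs_nonneg ε, hM0 t]
    calc |H t (δx ε t ω)| ≤ KH t * (δx ε t ω) ^ 2 := hKHb t ht _ hδ1
    _ ≤ KH t * ((M t) ^ 2 * ε ^ 2) := mul_le_mul_of_nonneg_left hsq (hKH0 t)
    _ = KH t * (M t) ^ 2 * ε ^ 2 := by ring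
  -- E[δx t] = O(ε²)
  have hQ : ∀ t, t ≤ T → (fun ε : ℝ => ∫ ω, δx ε t ω ∂μ) =O[nhds 0] fun ε : ℝ => ε ^ 2 := by
    intro t
    induction t with
    | zero =>
      intro _
      simp only [hx0, integral_zero]
      exact isBigO_zero _ _
    | succ t ih =>
      intro h
      have ht : t < T := h
      have ihO := ih ht.le
      have hb1 : ∀ᶠ ε : ℝ in nhds 0, ‖∫ ω, δx ε (t+1) ω ∂μ‖ ≤
          1 * ‖|A t| * ‖∫ ω, δx ε t ω ∂μ‖ + KS t * (M t) ^ 2 * ε ^ 2‖ := by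
        filter_upwards [hev1 t] with ε hε
        have hae := hMP t ht.le ε hε
        have hMε : M t * |ε| ≤ 1 := by rw [mul_comm]; exact hε
        have haeS : ∀ᵐ ω ∂μ, |S t (δx ε t ω)| ≤ KS t * (M t) ^ 2 * ε ^ 2 := by
          filter_upwards [hae] with ω h1
          have hδ1 : |δx ε t ω| ≤ 1 := h1.trans hMε
          have hsq : (δx ε t ω) ^ 2 ≤ (M t) ^ 2 * ε ^ 2 := by
            have e1 := sq_abs (δx ε t ω)
            have e2 := sq_abs ε
            nlinarith [abs_nonneg (δx ε t ω), abs_nonneg ε, hM0 t]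
          calc |S t (δx ε t ω)| ≤ KS t * (δx ε t ω) ^ 2 := hKSb t ht _ hδ1
          _ ≤ KS t * ((M t) ^ 2 * ε ^ 2) := mul_le_mul_of_nonneg_left hsq (hKS0 t)
          _ = KS t * (M t) ^ 2 * ε ^ 2 := by ring
        have Int1 : Integrable (δx ε t) μ := int_of_bound (hmeasx ε t ht.le) hae
        have IntS : Integrable (fun ω => S t (δx ε t ω)) μ :=
          int_of_bound ((hS t ht).continuous.measurable.comp (hmeasx ε t ht.le)) haeS
        have IntW : Integrable (w t) μ := int_of_bound (hmeas t ht) (hbdB t ht)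
        have IntA : Integrable (fun ω => A t * δx ε t ω) μ := Int1.const_mul _
        have IntAS : Integrable (fun ω => A t * δx ε t ω + S t (δx ε t ω)) μ := IntA.add IntS
        have IntEW : Integrable (fun ω => ε * w t ω) μ := IntW.const_mul _
        have e1 : ∫ ω, δx ε (t+1) ω ∂μ =
            ∫ ω, (A t * δx ε t ω + S t (δx ε t ω)) + ε * w t ω ∂μ :=
          integral_congr_ae (Eventually.of_forall fun ω => hx ε t ht ω)
        have hint : ∫ ω, δx ε (t+1) ω ∂μ =
            A t * ∫ ω, δx ε t ω ∂μ + ∫ ω, S t (δx ε t ω) ∂μ := by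
          rw [e1, integral_add IntAS IntEW, integral_add IntA IntS, integral_const_mul,
            integral_const_mul, hmean t ht, mul_zero, add_zero]
        rw [hint, one_mul]
        have hSle : |∫ ω, S t (δx ε t ω) ∂μ| ≤ KS t * (M t) ^ 2 * ε ^ 2 := abs_int_le haeS
        rw [Real.norm_eq_abs, Real.norm_eq_abs, Real.norm_eq_abs]
        have h1 : |A t * ∫ ω, δx ε t ω ∂μ + ∫ ω, S t (δx ε t ω) ∂μ| ≤
            |A t| * |∫ ω, δx ε t ω ∂μ| + KS t * (M t) ^ 2 * ε ^ 2 := by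
          calc _ ≤ |A t * ∫ ω, δx ε t ω ∂μ| + |∫ ω, S t (δx ε t ω) ∂μ| := abs_add_le _ _
          _ ≤ |A t| * |∫ ω, δx ε t ω ∂μ| + KS t * (M t) ^ 2 * ε ^ 2 := by
              rw [abs_mul]; gcongr
        exact h1.trans (le_abs_self _)
      have hrhs : (fun ε : ℝ => |A t| * ‖∫ ω, δx ε t ω ∂μ‖ + KS t * (M t) ^ 2 * ε ^ 2)
          =O[nhds 0] fun ε : ℝ => ε ^ 2 :=
        (ihO.norm_left.const_mul_left _).add
          ((isBigO_refl (fun ε : ℝ => ε ^ 2) _).const_mul_left _)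
      exact (IsBigO.of_bound 1 hb1).trans hrhs
  -- E[H t (δx t)] = O(ε²)
  have hQH : ∀ t, t ≤ T → (fun ε : ℝ => ∫ ω, H t (δx ε t ω) ∂μ) =O[nhds 0]
      fun ε : ℝ => ε ^ 2 := by
    intro t ht
    refine IsBigO.of_bound (KH t * (M t) ^ 2) ?_
    filter_upwards [hev1 t] with ε hε
    rw [Real.norm_eq_abs, Real.norm_eq_abs, mul_assoc]
    calc |∫ ω, H t (δx ε t ω) ∂μ| ≤ KH t * (M t) ^ 2 * ε ^ 2 := abs_int_le (haeHb t ht ε hε)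
    _ ≤ KH t * ((M t) ^ 2 * |ε ^ 2|) := by
        rw [abs_of_nonneg (sq_nonneg ε), ← mul_assoc]
  -- assemble
  have hevAll : ∀ᶠ ε : ℝ in nhds 0, ∀ t ∈ Finset.range (T+1), |ε| * M t ≤ 1 :=
    (Finset.eventually_all (Finset.range (T+1))).mpr fun t _ => hev1 t
  have hFG : (fun ε : ℝ =>
        (∫ ω, (∑ t ∈ Finset.range (T + 1), (c t + C t * δx ε t ω + H t (δx ε t ω))) ∂μ)
        - ∑ t ∈ Finset.range (T + 1), c t) =ᶠ[nhds 0]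
      fun ε : ℝ => ∑ t ∈ Finset.range (T + 1),
        (C t * ∫ ω, δx ε t ω ∂μ + ∫ ω, H t (δx ε t ω) ∂μ) := by
    filter_upwards [hevAll] with ε hε
    have hInt : ∀ t ∈ Finset.range (T+1), Integrable (δx ε t) μ := by
      intro t htm
      have ht : t ≤ T := Finset.mem_range_succ_iff.mp htm
      exact int_of_bound (hmeasx ε t ht) (hMP t ht ε (hε t htm))
    have hIntH : ∀ t ∈ Finset.range (T+1), Integrable (fun ω => H t (δx ε t ω)) μ := by
      intro t htm
      have ht : t ≤ T := Finset.mem_range_succ_iff.mp htm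
      exact int_of_bound ((hH t ht).continuous.measurable.comp (hmeasx ε t ht))
        (haeHb t ht ε (hε t htm))
    have hIntTerm : ∀ t ∈ Finset.range (T+1),
        Integrable (fun ω => c t + C t * δx ε t ω + H t (δx ε t ω)) μ := fun t htm =>
      ((integrable_const _).add ((hInt t htm).const_mul _)).add (hIntH t htm)
    have hsum : ∫ ω, (∑ t ∈ Finset.range (T + 1),
          (c t + C t * δx ε t ω + H t (δx ε t ω))) ∂μ =
        ∑ t ∈ Finset.range (T + 1), ∫ ω, (c t + C t * δx ε t ω + H t (δx ε t ω)) ∂μ :=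
      integral_finset_sum _ hIntTerm
    have hterm : ∀ t ∈ Finset.range (T+1),
        ∫ ω, (c t + C t * δx ε t ω + H t (δx ε t ω)) ∂μ =
          c t + (C t * ∫ ω, δx ε t ω ∂μ + ∫ ω, H t (δx ε t ω) ∂μ) := by
      intro t htm
      have I0 : Integrable (fun _ : Ω => c t) μ := integrable_const _
      have I1 : Integrable (fun ω => C t * δx ε t ω) μ := (hInt t htm).const_mul _
      have I2 : Integrable (fun ω => c t + C t * δx ε t ω) μ := I0.add I1
      rw [integral_add I2 (hIntH t htm), integral_add I0 I1, integral_const,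
        integral_const_mul]
      simp [measure_univ]
      ring
    rw [hsum, Finset.sum_congr rfl hterm, Finset.sum_add_distrib]
    ring
  refine hFG.trans_isBigO ?_
  refine Asymptotics.IsBigO.fun_sum fun t htm => ?_
  have ht : t ≤ T := Finset.mem_range_succ_iff.mp htm
  exact ((hQ t ht).const_mul_left _).add (hQH t ht)
end

section
/- If the noise values w_0,…,w_{T−1} are independent real random variables, each with zero mean, zero third moment, and almost surely bounded by a common constant, then the variance of the closed-loop cost satisfies Var[J(ε)] = Var[δJ1(ε)] + O(ε⁴) as ε → 0; that is, ε ↦ Var[J(ε)] − Var[δJ1(ε)] is O(ε⁴) in the neighborhood filter of 0. (Theorem 1, variance part: the variance of the cost under a smooth feedback policy is determined, up to fourth order in ε, solely by the first-order cost perturbation of the linear closed-loop system.) -/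
open Asymptotics Filter MeasureTheory ProbabilityTheory


section Seq
variable {Ω : Type*}

/-- linear part of the state sequence -/
def seqY (A : ℕ → ℝ) (w : ℕ → Ω → ℝ) : ℕ → Ω → ℝ
  | 0 => fun _ => 0
  | t + 1 => fun ω => A t * seqY A w t ω + w t ω

/-- quadratic part of the state sequence -/
def seqZ (A : ℕ → ℝ) (b : ℕ → ℝ) (w : ℕ → Ω → ℝ) : ℕ → Ω → ℝ
  | 0 => fun _ => 0
  | t + 1 => fun ω => A t * seqZ A b w t ω + b t * (seqY A w t ω) ^ 2

lemma seqY_eq_sum (A : ℕ → ℝ) (w : ℕ → Ω → ℝ) (t : ℕ) (ω : Ω) :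
    seqY A w t ω = ∑ s ∈ Finset.range t, (∏ u ∈ Finset.Ico (s+1) t, A u) * w s ω := by
  induction t with
  | zero => simp [seqY]
  | succ t ih =>
    show A t * seqY A w t ω + w t ω = _
    rw [ih, Finset.sum_range_succ, Finset.mul_sum]
    congr 1
    · apply Finset.sum_congr rfl
      intro s hs
      rw [Finset.mem_range] at hs
      rw [Finset.prod_Ico_succ_top (by omega)]
      ring
    · simp

lemma seqZ_eq_sum (A : ℕ → ℝ) (b : ℕ → ℝ) (w : ℕ → Ω → ℝ) (t : ℕ) (ω : Ω) :
    seqZ A b w t ω =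
      ∑ s ∈ Finset.range t, (∏ u ∈ Finset.Ico (s+1) t, A u) * (b s * (seqY A w s ω) ^ 2) := by
  induction t with
  | zero => simp [seqZ]
  | succ t ih =>
    show A t * seqZ A b w t ω + b t * (seqY A w t ω) ^ 2 = _
    rw [ih, Finset.sum_range_succ, Finset.mul_sum]
    congr 1
    · apply Finset.sum_congr rfl
      intro s hs
      rw [Finset.mem_range] at hs
      rw [Finset.prod_Ico_succ_top (by omega)]
      ring
    · simp

lemma seqY_measurable [MeasurableSpace Ω] {A : ℕ → ℝ} {w : ℕ → Ω → ℝ} {t : ℕ}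
    (h : ∀ s < t, Measurable (w s)) : Measurable (seqY A w t) := by
  induction t with
  | zero => simpa [seqY] using measurable_const
  | succ t ih =>
    have h1 : Measurable (seqY A w t) := ih fun s hs => h s (by omega)
    exact (h1.const_mul (A t)).add (h t (by omega))

lemma seqZ_measurable [MeasurableSpace Ω] {A : ℕ → ℝ} {b : ℕ → ℝ} {w : ℕ → Ω → ℝ} {t : ℕ}
    (h : ∀ s < t, Measurable (w s)) : Measurable (seqZ A b w t) := by
  induction t with
  | zero => simpa [seqZ] using measurable_const
  | succ t ih =>
    have h1 : Measurable (seqZ A b w t) := ih fun s hs => h s (by omega)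
    have h2 : Measurable (seqY A w t) := seqY_measurable fun s hs => h s (by omega)
    exact (h1.const_mul (A t)).add ((h2.pow_const 2).const_mul (b t))

/-- bound sequence for `seqY` -/
def seqYbd (A : ℕ → ℝ) (c : ℝ) : ℕ → ℝ
  | 0 => 0
  | t + 1 => |A t| * seqYbd A c t + c

def seqZbd (A : ℕ → ℝ) (b : ℕ → ℝ) (c : ℝ) : ℕ → ℝ
  | 0 => 0
  | t + 1 => |A t| * seqZbd A b c t + |b t| * (seqYbd A c t) ^ 2

lemma seqYbd_nonneg {A : ℕ → ℝ} {c : ℝ} (hc : 0 ≤ c) (t : ℕ) : 0 ≤ seqYbd A c t := by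
  induction t with
  | zero => simp [seqYbd]
  | succ t ih => exact add_nonneg (mul_nonneg (abs_nonneg _) ih) hc

lemma abs_seqY_le {A : ℕ → ℝ} {w : ℕ → Ω → ℝ} {c : ℝ} {t : ℕ} {ω : Ω}
    (h : ∀ s < t, |w s ω| ≤ c) : |seqY A w t ω| ≤ seqYbd A c t := by
  induction t with
  | zero => simp [seqY, seqYbd]
  | succ t ih =>
    have h1 := ih fun s hs => h s (by omega)
    calc |seqY A w (t+1) ω| = |A t * seqY A w t ω + w t ω| := rfl
    _ ≤ |A t| * |seqY A w t ω| + |w t ω| := by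
        refine (abs_add_le _ _).trans ?_; rw [abs_mul]
    _ ≤ |A t| * seqYbd A c t + c :=
        add_le_add (mul_le_mul_of_nonneg_left h1 (abs_nonneg _)) (h t (by omega))
    _ = seqYbd A c (t+1) := rfl

lemma abs_seqZ_le {A : ℕ → ℝ} {b : ℕ → ℝ} {w : ℕ → Ω → ℝ} {c : ℝ} {t : ℕ} {ω : Ω}
    (h : ∀ s < t, |w s ω| ≤ c) : |seqZ A b w t ω| ≤ seqZbd A b c t := by
  induction t with
  | zero => simp [seqZ, seqZbd]
  | succ t ih =>
    have h1 := ih fun s hs => h s (by omega)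
    have h2 : |seqY A w t ω| ≤ seqYbd A c t := abs_seqY_le fun s hs => h s (by omega)
    calc |seqZ A b w (t+1) ω| = |A t * seqZ A b w t ω + b t * (seqY A w t ω) ^ 2| := rfl
    _ ≤ |A t| * |seqZ A b w t ω| + |b t| * |seqY A w t ω| ^ 2 := by
        refine (abs_add_le _ _).trans ?_
        rw [abs_mul, abs_mul, abs_pow]
    _ ≤ |A t| * seqZbd A b c t + |b t| * (seqYbd A c t) ^ 2 := by
        refine add_le_add (mul_le_mul_of_nonneg_left h1 (abs_nonneg _)) ?_
        refine mul_le_mul_of_nonneg_left ?_ (abs_nonneg _)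
        exact pow_le_pow_left₀ (abs_nonneg _) h2 2
    _ = seqZbd A b c (t+1) := rfl

end Seq

/-- a bounded measurable function is integrable w.r.t. a finite measure -/
lemma integrable_of_bdd {Ω : Type*} [MeasurableSpace Ω] {μ : Measure Ω} [IsFiniteMeasure μ]
    {f : Ω → ℝ} (hf : AEStronglyMeasurable f μ) {M : ℝ} (h : ∀ᵐ ω ∂μ, |f ω| ≤ M) :
    Integrable f μ :=
  Integrable.mono' (integrable_const M) hf (by simpa [Real.norm_eq_abs] using h)


section Moments

variable {Ω : Type*} [MeasurableSpace Ω] {μ : Measure Ω} [IsProbabilityMeasure μ]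
  {T : ℕ} {w : ℕ → Ω → ℝ} {A bq : ℕ → ℝ} {Cb : ℝ}

lemma integrable_of_bdd' {f : Ω → ℝ} (hf : AEStronglyMeasurable f μ) {M : ℝ}
    (h : ∀ᵐ ω ∂μ, |f ω| ≤ M) : Integrable f μ :=
  Integrable.mono' (integrable_const M) hf (by simpa [Real.norm_eq_abs] using h)

lemma integral_www_eq_zero
    (hmeas : ∀ t < T, Measurable (w t))
    (hindep : ProbabilityTheory.iIndepFun (fun t : Fin T => w t) μ)
    (hmean : ∀ t < T, ∫ ω, w t ω ∂μ = 0)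
    (hthird : ∀ t < T, ∫ ω, (w t ω) ^ 3 ∂μ = 0)
    (hbd : ∀ t < T, ∀ᵐ ω ∂μ, |w t ω| ≤ Cb)
    {a b c : ℕ} (ha : a < T) (hb : b < T) (hc : c < T) :
    ∫ ω, w a ω * w b ω * w c ω ∂μ = 0 := by
  have hC : 0 ≤ max Cb 0 := le_max_right _ _
  have hbd' : ∀ t < T, ∀ᵐ ω ∂μ, |w t ω| ≤ max Cb 0 := fun t ht => by
    filter_upwards [hbd t ht] with ω h using h.trans (le_max_left _ _)
  have hInt : ∀ t < T, Integrable (w t) μ := fun t ht =>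
    integrable_of_bdd' (hmeas t ht).aestronglyMeasurable (hbd' t ht)
  have hInt2 : ∀ i j, i < T → j < T → Integrable (fun ω => w i ω * w j ω) μ := by
    intro i j hi hj
    refine integrable_of_bdd' ((hmeas i hi).mul (hmeas j hj)).aestronglyMeasurable
      (M := max Cb 0 * max Cb 0) ?_
    filter_upwards [hbd' i hi, hbd' j hj] with ω h1 h2
    rw [abs_mul]; exact mul_le_mul h1 h2 (abs_nonneg _) hC
  have key : ∀ i j k : ℕ, i < T → j < T → k < T → k ≠ i → k ≠ j →
      ∫ ω, w i ω * w j ω * w k ω ∂μ = 0 := by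
    intro i j k hi hj hk hki hkj
    have hpair : IndepFun (fun ω => (w i ω, w j ω)) (w k) μ := by
      have := hindep.indepFun_prodMk (fun t => hmeas t t.2) ⟨i, hi⟩ ⟨j, hj⟩ ⟨k, hk⟩
        (by simp [Fin.ext_iff]; omega) (by simp [Fin.ext_iff]; omega)
      exact this
    have hmul : IndepFun (fun ω => w i ω * w j ω) (w k) μ := by
      have := hpair.comp (φ := fun p : ℝ × ℝ => p.1 * p.2) (ψ := id)
        (measurable_fst.mul measurable_snd) measurable_id
      exact this
    have heq := hmul.integral_mul_eq_mul_integral (hInt2 i j hi hj).aestronglyMeasurable (hInt k hk).aestronglyMeasurable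
    have : (fun ω => w i ω * w j ω) * w k = fun ω => w i ω * w j ω * w k ω := rfl
    rw [this] at heq
    rw [heq, hmean k hk, mul_zero]
  by_cases hab : a = b
  · subst hab
    by_cases hac : a = c
    · subst hac
      have : ∀ ω, w a ω * w a ω * w a ω = (w a ω) ^ 3 := fun ω => by ring
      rw [show (fun ω => w a ω * w a ω * w a ω) = fun ω => (w a ω)^3 from funext this] at *
      exact hthird a ha
    · exact key a a c ha ha hc (fun h => hac h.symm) (fun h => hac h.symm)
  · by_cases hac : a = c
    · subst hac
      have : (fun ω => w a ω * w b ω * w a ω) = fun ω => w a ω * w a ω * w b ω :=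
        funext fun ω => by ring
      rw [this]
      exact key a a b ha ha hb (Ne.symm hab) (Ne.symm hab)
    · by_cases hbc : b = c
      · subst hbc
        have : (fun ω => w a ω * w b ω * w b ω) = fun ω => w b ω * w b ω * w a ω :=
          funext fun ω => by ring
        rw [this]
        exact key b b a hb hb ha hab hab
      · exact key a b c ha hb hc (fun h => hac h.symm) (fun h => hbc h.symm)

lemma integral_yyy_eq_zero
    (hmeas : ∀ t < T, Measurable (w t))
    (hindep : ProbabilityTheory.iIndepFun (fun t : Fin T => w t) μ)
    (hmean : ∀ t < T, ∫ ω, w t ω ∂μ = 0)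
    (hthird : ∀ t < T, ∫ ω, (w t ω) ^ 3 ∂μ = 0)
    (hbd : ∀ t < T, ∀ᵐ ω ∂μ, |w t ω| ≤ Cb)
    {i j k : ℕ} (hi : i ≤ T) (hj : j ≤ T) (hk : k ≤ T) :
    ∫ ω, seqY A w i ω * seqY A w j ω * seqY A w k ω ∂μ = 0 := by
  have hC : 0 ≤ max Cb 0 := le_max_right _ _
  have hbd' : ∀ t < T, ∀ᵐ ω ∂μ, |w t ω| ≤ max Cb 0 := fun t ht => by
    filter_upwards [hbd t ht] with ω h using h.trans (le_max_left _ _)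
  set c1 : ℕ → ℕ → ℝ := fun t s => ∏ u ∈ Finset.Ico (s+1) t, A u with hc1
  have expand : ∀ ω, seqY A w i ω * seqY A w j ω * seqY A w k ω =
      ∑ s1 ∈ Finset.range i, ∑ s2 ∈ Finset.range j, ∑ s3 ∈ Finset.range k,
        (c1 i s1 * c1 j s2 * c1 k s3) * (w s1 ω * w s2 ω * w s3 ω) := by
    intro ω
    rw [seqY_eq_sum, seqY_eq_sum, seqY_eq_sum, Finset.sum_mul_sum, Finset.sum_mul]
    refine Finset.sum_congr rfl fun s1 _ => ?_
    rw [Finset.sum_mul]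
    refine Finset.sum_congr rfl fun s2 _ => ?_
    rw [Finset.mul_sum]
    refine Finset.sum_congr rfl fun s3 _ => ?_
    ring
  have hIntTerm : ∀ s1 s2 s3 : ℕ, s1 < T → s2 < T → s3 < T → ∀ r : ℝ,
      Integrable (fun ω => r * (w s1 ω * w s2 ω * w s3 ω)) μ := by
    intro s1 s2 s3 h1 h2 h3 r
    refine integrable_of_bdd'
      ((((hmeas s1 h1).mul (hmeas s2 h2)).mul (hmeas s3 h3)).const_mul r).aestronglyMeasurable
      (M := |r| * (max Cb 0 * max Cb 0 * max Cb 0)) ?_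
    filter_upwards [hbd' s1 h1, hbd' s2 h2, hbd' s3 h3] with ω g1 g2 g3
    rw [abs_mul, abs_mul, abs_mul]
    refine mul_le_mul_of_nonneg_left ?_ (abs_nonneg r)
    refine mul_le_mul (mul_le_mul g1 g2 (abs_nonneg _) hC) g3 (abs_nonneg _) ?_
    exact mul_nonneg hC hC
  calc ∫ ω, seqY A w i ω * seqY A w j ω * seqY A w k ω ∂μ
      = ∫ ω, ∑ s1 ∈ Finset.range i, ∑ s2 ∈ Finset.range j, ∑ s3 ∈ Finset.range k,
          (c1 i s1 * c1 j s2 * c1 k s3) * (w s1 ω * w s2 ω * w s3 ω) ∂μ := by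
        exact integral_congr_ae (Eventually.of_forall expand)
  _ = 0 := by
    rw [integral_finset_sum]
    · apply Finset.sum_eq_zero
      intro s1 hs1
      rw [Finset.mem_range] at hs1
      rw [integral_finset_sum]
      · apply Finset.sum_eq_zero
        intro s2 hs2
        rw [Finset.mem_range] at hs2
        rw [integral_finset_sum]
        · apply Finset.sum_eq_zero
          intro s3 hs3
          rw [Finset.mem_range] at hs3
          rw [integral_const_mul, integral_www_eq_zero hmeas hindep hmean hthird hbd
            (by omega) (by omega) (by omega), mul_zero]
        · intro s3 hs3
          rw [Finset.mem_range] at hs3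
          exact hIntTerm s1 s2 s3 (by omega) (by omega) (by omega) _
      · intro s2 hs2
        rw [Finset.mem_range] at hs2
        apply integrable_finset_sum
        intro s3 hs3
        rw [Finset.mem_range] at hs3
        exact hIntTerm s1 s2 s3 (by omega) (by omega) (by omega) _
    · intro s1 hs1
      rw [Finset.mem_range] at hs1
      apply integrable_finset_sum
      intro s2 hs2
      rw [Finset.mem_range] at hs2
      apply integrable_finset_sum
      intro s3 hs3
      rw [Finset.mem_range] at hs3
      exact hIntTerm s1 s2 s3 (by omega) (by omega) (by omega) _

end Moments
section Moments2

variable {Ω : Type*} [MeasurableSpace Ω] {μ : Measure Ω} [IsProbabilityMeasure μ]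
  {T : ℕ} {w : ℕ → Ω → ℝ} {A bq : ℕ → ℝ} {Cb : ℝ}

lemma ae_bound_all (hbd : ∀ t < T, ∀ᵐ ω ∂μ, |w t ω| ≤ Cb) :
    ∀ᵐ ω ∂μ, ∀ t, t < T → |w t ω| ≤ max Cb 0 := by
  rw [ae_all_iff]
  intro t
  by_cases ht : t < T
  · filter_upwards [hbd t ht] with ω h _ using h.trans (le_max_left _ _)
  · filter_upwards with ω h using absurd h ht

lemma integral_seqY_eq_zero
    (hmeas : ∀ t < T, Measurable (w t))
    (hmean : ∀ t < T, ∫ ω, w t ω ∂μ = 0)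
    (hbd : ∀ t < T, ∀ᵐ ω ∂μ, |w t ω| ≤ Cb)
    {t : ℕ} (ht : t ≤ T) :
    ∫ ω, seqY A w t ω ∂μ = 0 := by
  have hbd' : ∀ s < T, ∀ᵐ ω ∂μ, |w s ω| ≤ max Cb 0 := fun s hs => by
    filter_upwards [hbd s hs] with ω h using h.trans (le_max_left _ _)
  have h1 : (fun ω => seqY A w t ω) =
      fun ω => ∑ s ∈ Finset.range t, (∏ u ∈ Finset.Ico (s+1) t, A u) * w s ω :=
    funext fun ω => seqY_eq_sum A w t ω
  rw [h1, integral_finset_sum]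
  · apply Finset.sum_eq_zero
    intro s hs
    rw [Finset.mem_range] at hs
    rw [integral_const_mul, hmean s (by omega), mul_zero]
  · intro s hs
    rw [Finset.mem_range] at hs
    exact (integrable_of_bdd' ((hmeas s (by omega)).const_mul _).aestronglyMeasurable
      (M := |∏ u ∈ Finset.Ico (s+1) t, A u| * max Cb 0)
      (by filter_upwards [hbd' s (by omega)] with ω h
          rw [abs_mul]
          exact mul_le_mul_of_nonneg_left h (abs_nonneg _)))

lemma integral_seqZ_mul_seqY_eq_zero
    (hmeas : ∀ t < T, Measurable (w t))
    (hindep : ProbabilityTheory.iIndepFun (fun t : Fin T => w t) μ)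
    (hmean : ∀ t < T, ∫ ω, w t ω ∂μ = 0)
    (hthird : ∀ t < T, ∫ ω, (w t ω) ^ 3 ∂μ = 0)
    (hbd : ∀ t < T, ∀ᵐ ω ∂μ, |w t ω| ≤ Cb)
    {t k : ℕ} (ht : t ≤ T) (hk : k ≤ T) :
    ∫ ω, seqZ A bq w t ω * seqY A w k ω ∂μ = 0 := by
  have hall := ae_bound_all (μ := μ) hbd
  have hyMeas : ∀ s ≤ T, Measurable (seqY A w s) := fun s hs =>
    seqY_measurable fun u hu => hmeas u (by omega)
  have hIntTerm : ∀ s, s ≤ T → ∀ r : ℝ,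
      Integrable (fun ω => r * (seqY A w s ω * seqY A w s ω * seqY A w k ω)) μ := by
    intro s hs r
    refine integrable_of_bdd'
      ((((hyMeas s hs).mul (hyMeas s hs)).mul (hyMeas k hk)).const_mul r).aestronglyMeasurable
      (M := |r| * (seqYbd A (max Cb 0) s * seqYbd A (max Cb 0) s * seqYbd A (max Cb 0) k)) ?_
    filter_upwards [hall] with ω hw
    have hys : |seqY A w s ω| ≤ seqYbd A (max Cb 0) s :=
      abs_seqY_le fun u hu => hw u (by omega)
    have hyk : |seqY A w k ω| ≤ seqYbd A (max Cb 0) k :=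
      abs_seqY_le fun u hu => hw u (by omega)
    rw [abs_mul, abs_mul, abs_mul]
    refine mul_le_mul_of_nonneg_left ?_ (abs_nonneg r)
    refine mul_le_mul (mul_le_mul hys hys (abs_nonneg _) ?_) hyk (abs_nonneg _) ?_
    · exact (abs_nonneg _).trans hys
    · exact mul_nonneg ((abs_nonneg _).trans hys) ((abs_nonneg _).trans hys)
  have expand : (fun ω => seqZ A bq w t ω * seqY A w k ω) = fun ω =>
      ∑ s ∈ Finset.range t, ((∏ u ∈ Finset.Ico (s+1) t, A u) * bq s) *
        (seqY A w s ω * seqY A w s ω * seqY A w k ω) := by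
    funext ω
    rw [seqZ_eq_sum, Finset.sum_mul]
    refine Finset.sum_congr rfl fun s _ => ?_
    ring
  rw [expand, integral_finset_sum]
  · apply Finset.sum_eq_zero
    intro s hs
    rw [Finset.mem_range] at hs
    rw [integral_const_mul,
      integral_yyy_eq_zero hmeas hindep hmean hthird hbd (by omega) (by omega) hk, mul_zero]
  · intro s hs
    rw [Finset.mem_range] at hs
    exact hIntTerm s (by omega) _

end Moments2

lemma cubic_bound {g : ℝ → ℝ} (hg : ContDiff ℝ 3 g) :
    ∃ K, 0 ≤ K ∧ ∀ x : ℝ, |x| ≤ 1 →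
      |g x - g 0 - deriv g 0 * x - deriv (deriv g) 0 / 2 * x ^ 2| ≤ K * |x| ^ 3 := by
  have hg' : ContDiff ℝ (2+1) g := by norm_num; exact hg
  have hd1 : Differentiable ℝ g := (contDiff_succ_iff_deriv.1 hg').1
  have hg2 : ContDiff ℝ (1+1) (deriv g) := by
    have := (contDiff_succ_iff_deriv.1 hg').2.2; norm_num at this ⊢; exact this
  have hd2 : Differentiable ℝ (deriv g) := (contDiff_succ_iff_deriv.1 hg2).1
  have hg1 : ContDiff ℝ (0+1) (deriv (deriv g)) := by
    have := (contDiff_succ_iff_deriv.1 hg2).2.2; norm_num at this ⊢; exact this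
  have hd3 : Differentiable ℝ (deriv (deriv g)) := (contDiff_succ_iff_deriv.1 hg1).1
  have hc3 : Continuous (deriv (deriv (deriv g))) :=
    (contDiff_succ_iff_deriv.1 hg1).2.2.continuous
  obtain ⟨K3, hK3⟩ := (isCompact_Icc (a := (-1:ℝ)) (b := 1)).exists_bound_of_continuousOn
    hc3.continuousOn
  set K := max K3 0 with hK
  refine ⟨K, le_max_right _ _, ?_⟩
  intro x hx
  have hK3' : ∀ y ∈ Set.Icc (-1:ℝ) 1, ‖deriv (deriv (deriv g)) y‖ ≤ K := fun y hy =>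
    (hK3 y hy).trans (le_max_left _ _)
  have hA : ∀ y ∈ Set.Icc (-1:ℝ) 1, |deriv (deriv g) y - deriv (deriv g) 0| ≤ K * |y| := by
    intro y hy
    have := Convex.norm_image_sub_le_of_norm_deriv_le (f := deriv (deriv g))
      (s := Set.Icc (-1:ℝ) 1) (x := 0) (y := y) (fun z _ => hd3 z) hK3' (convex_Icc _ _)
      (Set.mem_Icc.mpr ⟨by norm_num, by norm_num⟩) hy
    simpa [Real.norm_eq_abs] using this
  set a := deriv g 0 with ha
  set b := deriv (deriv g) 0 with hb
  set s : Set ℝ := Set.Icc (-|x|) |x| with hs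
  have hsub : s ⊆ Set.Icc (-1:ℝ) 1 := by
    intro y hy; exact Set.mem_Icc.mpr ⟨by linarith [hy.1, hx], by linarith [hy.2, hx]⟩
  have h0s : (0:ℝ) ∈ s := Set.mem_Icc.mpr ⟨by simp [abs_nonneg], abs_nonneg x⟩
  have hxs : x ∈ s := Set.mem_Icc.mpr ⟨neg_abs_le x, le_abs_self x⟩
  set q : ℝ → ℝ := fun y => deriv g y - a - b * y with hqdef
  have hq : ∀ y, HasDerivAt q (deriv (deriv g) y - b) y := by
    intro y
    have h1 : HasDerivAt (fun y => deriv g y - a) (deriv (deriv g) y) y :=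
      ((hd2 y).hasDerivAt).sub_const a
    have h2 : HasDerivAt (fun y : ℝ => b * y) b y := by
      simpa using (hasDerivAt_id y).const_mul b
    exact h1.sub h2
  have hq0 : q 0 = 0 := by simp [hqdef, ha]
  have hqbd : ∀ y ∈ s, |q y| ≤ K * |x| * |y| := by
    intro y hy
    have := Convex.norm_image_sub_le_of_norm_deriv_le (f := q) (s := s) (x := 0) (y := y)
      (fun z _ => (hq z).differentiableAt)
      (fun z hz => by
        rw [(hq z).deriv]
        have h1 := hA z (hsub hz)
        have hz' : |z| ≤ |x| := abs_le.2 ⟨hz.1, hz.2⟩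
        calc ‖deriv (deriv g) z - b‖ ≤ K * |z| := h1
        _ ≤ K * |x| := mul_le_mul_of_nonneg_left hz' (le_max_right _ _))
      (convex_Icc _ _) h0s hy
    simpa [Real.norm_eq_abs, hq0] using this
  set p : ℝ → ℝ := fun y => g y - g 0 - a * y - b / 2 * y ^ 2 with hpdef
  have hp : ∀ y, HasDerivAt p (q y) y := by
    intro y
    have h1 : HasDerivAt (fun y => g y - g 0) (deriv g y) y := ((hd1 y).hasDerivAt).sub_const _
    have h2 : HasDerivAt (fun y : ℝ => a * y) a y := by simpa using (hasDerivAt_id y).const_mul a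
    have h3 : HasDerivAt (fun y : ℝ => b / 2 * y ^ 2) (b / 2 * (2 * y)) y := by
      simpa using (hasDerivAt_pow 2 y).const_mul (b/2)
    have h4 := (h1.sub h2).sub h3
    have : q y = deriv g y - a - b * y := rfl
    rw [this]; convert h4 using 1
    · rfl
    · rfl
    · rfl
    · ring
  have hp0 : p 0 = 0 := by simp [hpdef]
  have hfin := Convex.norm_image_sub_le_of_norm_deriv_le (f := p) (s := s) (x := 0) (y := x)
    (fun z _ => (hp z).differentiableAt)
    (fun z hz => by
      rw [(hp z).deriv]
      have h1 := hqbd z hz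
      have hz' : |z| ≤ |x| := abs_le.2 ⟨hz.1, hz.2⟩
      calc ‖q z‖ ≤ K * |x| * |z| := h1
      _ ≤ K * |x| * |x| := mul_le_mul_of_nonneg_left hz'
          (mul_nonneg (le_max_right _ _) (abs_nonneg _)))
    (convex_Icc _ _) h0s hxs
  have hfin' : |p x| ≤ K * |x| * |x| * |x| := by
    simpa [Real.norm_eq_abs, hp0] using hfin
  calc |g x - g 0 - a * x - b / 2 * x ^ 2| = |p x| := rfl
  _ ≤ K * |x| * |x| * |x| := hfin'
  _ = K * |x| ^ 3 := by ring
lemma seqZbd_nonneg {A b : ℕ → ℝ} {c : ℝ} (t : ℕ) : 0 ≤ seqZbd A b c t := by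
  induction t with
  | zero => simp [seqZbd]
  | succ t ih =>
    exact add_nonneg (mul_nonneg (abs_nonneg _) ih)
      (mul_nonneg (abs_nonneg _) (sq_nonneg _))

lemma state_expansion {Ω : Type*} (T : ℕ) (A : ℕ → ℝ) (S : ℕ → ℝ → ℝ)
    (hS : ∀ t < T, ContDiff ℝ 3 (S t)) (hS0 : ∀ t < T, S t 0 = 0)
    (hS1 : ∀ t < T, deriv (S t) 0 = 0)
    (w : ℕ → Ω → ℝ) (Cb' : ℝ) (hCb' : 0 ≤ Cb')
    (δx : ℝ → ℕ → Ω → ℝ) (hx0 : ∀ ε ω, δx ε 0 ω = 0)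
    (hx : ∀ ε, ∀ t < T, ∀ ω, δx ε (t + 1) ω = A t * δx ε t ω + S t (δx ε t ω) + ε * w t ω)
    (t : ℕ) (ht : t ≤ T) :
    ∃ B : ℝ, 1 ≤ B ∧ ∀ ε : ℝ, ∀ ω : Ω, |ε| * B ≤ 1 → (∀ s < T, |w s ω| ≤ Cb') →
      ∀ s ≤ t, |δx ε s ω| ≤ B * |ε| ∧
        |δx ε s ω - ε * seqY A w s ω -
          ε^2 * seqZ A (fun u => deriv (deriv (S u)) 0 / 2) w s ω| ≤ B * |ε|^3 := by
  induction t with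
  | zero =>
    refine ⟨1, le_refl 1, ?_⟩
    intro ε ω hε hw s hs
    interval_cases s
    simp [hx0, seqY, seqZ, abs_nonneg]
  | succ t ih =>
    have htT : t < T := by omega
    obtain ⟨B, hB1, hB⟩ := ih (by omega)
    obtain ⟨K, hK0, hKb⟩ := cubic_bound (hS t htT)
    set bS : ℕ → ℝ := fun u => deriv (deriv (S u)) 0 / 2 with hbSdef
    set Yb := seqYbd A Cb' t with hYb
    set Zb := seqZbd A bS Cb' t with hZb
    have hYb0 : 0 ≤ Yb := seqYbd_nonneg hCb' t
    have hZb0 : 0 ≤ Zb := seqZbd_nonneg t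
    set Bn := B + |A t| * B + K * B^3 + |bS t| * (B + Zb) * (B + Yb) +
      |bS t| * B + K * B + Cb' + 1 with hBn
    have hB0 : (0:ℝ) < B := lt_of_lt_of_le one_pos hB1
    have hBnB : B ≤ Bn := by
      have h1 : 0 ≤ |A t| * B := mul_nonneg (abs_nonneg _) hB0.le
      have h2 : 0 ≤ K * B^3 := mul_nonneg hK0 (by positivity)
      have h3 : 0 ≤ |bS t| * (B + Zb) * (B + Yb) := by positivity
      have h4 : 0 ≤ |bS t| * B := by positivity
      have h5 : 0 ≤ K * B := mul_nonneg hK0 hB0.le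
      simp only [hBn]; linarith
    have hBn1 : 1 ≤ Bn := hB1.trans hBnB
    refine ⟨Bn, hBn1, ?_⟩
    intro ε ω hε hw s hs
    have hεB : |ε| * B ≤ 1 := le_trans (mul_le_mul_of_nonneg_left hBnB (abs_nonneg ε)) hε
    rcases Nat.lt_or_ge s (t+1) with hst | hst
    · obtain ⟨g1, g2⟩ := hB ε ω hεB hw s (by omega)
      exact ⟨g1.trans (mul_le_mul_of_nonneg_right hBnB (abs_nonneg ε)),
        g2.trans (mul_le_mul_of_nonneg_right hBnB (by positivity))⟩
    · have hseq : s = t + 1 := by omega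
      subst hseq
      obtain ⟨hX, hd⟩ := hB ε ω hεB hw t (le_refl t)
      set X := δx ε t ω with hXdef
      set y := seqY A w t ω with hydef
      set z := seqZ A bS w t ω with hzdef
      have hε1 : |ε| ≤ 1 :=
        le_trans (le_mul_of_one_le_right (abs_nonneg ε) hBn1) hε
      have hXB : |X| ≤ B * |ε| := hX
      have hBε0 : 0 ≤ B * |ε| := by positivity
      have hBε1 : B * |ε| ≤ 1 := by linarith [hεB]
      have hX1 : |X| ≤ 1 := hXB.trans hBε1
      have hy : |y| ≤ Yb := abs_seqY_le fun u hu => hw u (by omega)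
      have hz : |z| ≤ Zb := abs_seqZ_le fun u hu => hw u (by omega)
      have hwt : |w t ω| ≤ Cb' := hw t htT
      have hSb : |S t X - bS t * X^2| ≤ K * |X|^3 := by
        have h := hKb X hX1
        rw [hS0 t htT, hS1 t htT] at h
        simpa [hbSdef] using h
      have hsq : (B*|ε|)^2 ≤ B*|ε| := by
        have := pow_le_pow_of_le_one hBε0 hBε1 (show 1 ≤ 2 by omega)
        rwa [pow_one] at this
      have hcub : (B*|ε|)^3 ≤ B*|ε| := by
        have := pow_le_pow_of_le_one hBε0 hBε1 (show 1 ≤ 3 by omega)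
        rwa [pow_one] at this
      have hSX : |S t X| ≤ |bS t| * (B*|ε|)^2 + K * (B*|ε|)^3 := by
        have h1 : |S t X| ≤ |S t X - bS t * X^2| + |bS t * X^2| := by
          calc |S t X| = |(S t X - bS t * X^2) + bS t * X^2| := by ring_nf
          _ ≤ _ := abs_add_le _ _
        have h2 : |bS t * X^2| = |bS t| * |X|^2 := by rw [abs_mul, abs_pow]
        have h3 : |X|^2 ≤ (B*|ε|)^2 := pow_le_pow_left₀ (abs_nonneg _) hXB 2
        have h4 : |X|^3 ≤ (B*|ε|)^3 := pow_le_pow_left₀ (abs_nonneg _) hXB 3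
        have h5 : K * |X|^3 ≤ K * (B*|ε|)^3 := mul_le_mul_of_nonneg_left h4 hK0
        have h6 : |bS t| * |X|^2 ≤ |bS t| * (B*|ε|)^2 :=
          mul_le_mul_of_nonneg_left h3 (abs_nonneg _)
        linarith
      constructor
      · rw [hx ε t htT ω, ← hXdef]
        calc |A t * X + S t X + ε * w t ω|
            ≤ |A t * X| + |S t X| + |ε * w t ω| := by
              refine le_trans (abs_add_le _ _) ?_
              have := abs_add_le (A t * X) (S t X)
              linarith
        _ ≤ |A t| * (B * |ε|) + (|bS t| * (B*|ε|) + K * (B*|ε|)) + |ε| * Cb' := by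
              rw [abs_mul, abs_mul]
              have h1 : |A t| * |X| ≤ |A t| * (B * |ε|) :=
                mul_le_mul_of_nonneg_left hXB (abs_nonneg _)
              have h2 : |bS t| * (B*|ε|)^2 ≤ |bS t| * (B*|ε|) :=
                mul_le_mul_of_nonneg_left hsq (abs_nonneg _)
              have h3 : K * (B*|ε|)^3 ≤ K * (B*|ε|) := mul_le_mul_of_nonneg_left hcub hK0
              have h4 : |ε| * |w t ω| ≤ |ε| * Cb' :=
                mul_le_mul_of_nonneg_left hwt (abs_nonneg _)
              linarith
        _ ≤ Bn * |ε| := by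
              simp only [hBn]
              have e1 : 0 ≤ K * B^3 * |ε| := by positivity
              have e2 : 0 ≤ |bS t| * (B + Zb) * (B + Yb) * |ε| := by positivity
              have e3 : 0 ≤ B * |ε| := hBε0
              have e4 : 0 ≤ |ε| := abs_nonneg ε
              linarith [e1, e2, e3, e4]
      · rw [hx ε t htT ω, ← hXdef]
        have hynext : seqY A w (t+1) ω = A t * y + w t ω := rfl
        have hznext : seqZ A bS w (t+1) ω = A t * z + bS t * y^2 := rfl
        rw [hynext, hznext]
        have hiden : A t * X + S t X + ε * w t ω - ε * (A t * y + w t ω) -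
            ε^2 * (A t * z + bS t * y^2) =
            A t * (X - ε * y - ε^2 * z) + (S t X - bS t * X^2) +
              bS t * ((X - ε*y) * (X + ε*y)) := by ring
        rw [hiden]
        have hd1 : |X - ε*y| ≤ (B + Zb) * ε^2 := by
          have h1 : |X - ε*y| ≤ |X - ε*y - ε^2*z| + |ε^2*z| := by
            calc |X - ε*y| = |(X - ε*y - ε^2*z) + ε^2*z| := by ring_nf
            _ ≤ _ := abs_add_le _ _
          have h2 : |ε^2*z| ≤ ε^2 * Zb := by
            rw [abs_mul, abs_pow, sq_abs]
            exact mul_le_mul_of_nonneg_left hz (sq_nonneg ε)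
          have h3 : |ε|^3 ≤ ε^2 := by
            have : |ε|^3 ≤ |ε|^2 := pow_le_pow_of_le_one (abs_nonneg ε) hε1 (by omega)
            rwa [sq_abs] at this
          have h4 : B * |ε|^3 ≤ B * ε^2 := mul_le_mul_of_nonneg_left h3 hB0.le
          linarith
        have hd2 : |X + ε*y| ≤ (B + Yb) * |ε| := by
          have h1 : |X + ε*y| ≤ |X| + |ε*y| := abs_add_le _ _
          have h2 : |ε*y| ≤ |ε| * Yb := by
            rw [abs_mul]
            exact mul_le_mul_of_nonneg_left hy (abs_nonneg ε)
          calc |X + ε*y| ≤ B * |ε| + |ε| * Yb := by linarith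
          _ = (B + Yb) * |ε| := by ring
        calc |A t * (X - ε * y - ε^2 * z) + (S t X - bS t * X^2) +
              bS t * ((X - ε*y) * (X + ε*y))|
            ≤ |A t| * |X - ε*y - ε^2*z| + |S t X - bS t * X^2| +
              |bS t| * (|X - ε*y| * |X + ε*y|) := by
              refine le_trans (abs_add_le _ _) ?_
              have h0 := abs_add_le (A t * (X - ε * y - ε^2 * z)) (S t X - bS t * X^2)
              have g1 : |A t * (X - ε * y - ε^2 * z)| = |A t| * |X - ε*y - ε^2*z| :=
                abs_mul _ _
              have g2 : |bS t * ((X - ε*y) * (X + ε*y))| =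
                  |bS t| * (|X - ε*y| * |X + ε*y|) := by rw [abs_mul, abs_mul]
              linarith
        _ ≤ |A t| * (B * |ε|^3) + K * (B*|ε|)^3 +
              |bS t| * (((B + Zb) * ε^2) * ((B + Yb) * |ε|)) := by
              have h1 : |A t| * |X - ε*y - ε^2*z| ≤ |A t| * (B * |ε|^3) :=
                mul_le_mul_of_nonneg_left hd (abs_nonneg _)
              have h2 : |S t X - bS t * X^2| ≤ K * (B*|ε|)^3 :=
                hSb.trans (mul_le_mul_of_nonneg_left
                  (pow_le_pow_left₀ (abs_nonneg _) hXB 3) hK0)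
              have h3 : |X - ε*y| * |X + ε*y| ≤ ((B + Zb) * ε^2) * ((B + Yb) * |ε|) := by
                refine mul_le_mul hd1 hd2 (abs_nonneg _) ?_
                positivity
              have h4 : |bS t| * (|X - ε*y| * |X + ε*y|) ≤
                  |bS t| * (((B + Zb) * ε^2) * ((B + Yb) * |ε|)) :=
                mul_le_mul_of_nonneg_left h3 (abs_nonneg _)
              linarith
        _ ≤ Bn * |ε|^3 := by
              have he2 : ε^2 = |ε|^2 := (sq_abs ε).symm
              have hfac : ((B + Zb) * ε^2) * ((B + Yb) * |ε|) =
                  (B + Zb) * (B + Yb) * |ε|^3 := by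
                rw [he2]; ring
              rw [hfac]
              have hb3 : K * (B*|ε|)^3 = K * B^3 * |ε|^3 := by ring
              rw [hb3]
              simp only [hBn]
              have e0 : 0 ≤ |ε|^3 := by positivity
              have f1 : 0 ≤ B * |ε|^3 := mul_nonneg hB0.le e0
              have f2 : 0 ≤ |bS t| * B * |ε|^3 :=
                mul_nonneg (mul_nonneg (abs_nonneg _) hB0.le) e0
              have f3 : 0 ≤ K * B * |ε|^3 := mul_nonneg (mul_nonneg hK0 hB0.le) e0
              have f4 : 0 ≤ Cb' * |ε|^3 := mul_nonneg hCb' e0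
              linarith [f1, f2, f3, f4, e0]
lemma variance_expand {Ω : Type*} [MeasurableSpace Ω] (μ : Measure Ω) [IsProbabilityMeasure μ]
    (k ε : ℝ) (D L1 : Ω → ℝ) (hD : Measurable D) (hL1 : Measurable L1)
    (MD ML : ℝ) (hMD : 0 ≤ MD) (hML : 0 ≤ ML)
    (hDb : ∀ᵐ ω ∂μ, |D ω| ≤ MD) (hLb : ∀ᵐ ω ∂μ, |L1 ω| ≤ ML) :
    ProbabilityTheory.variance (fun ω => k + (D ω + ε * L1 ω)) μ -
      ProbabilityTheory.variance (fun ω => ε * L1 ω) μ =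
    (∫ ω, D ω^2 ∂μ) - (∫ ω, D ω ∂μ)^2 + 2*ε*(∫ ω, D ω * L1 ω ∂μ) -
      2*ε*(∫ ω, D ω ∂μ)*(∫ ω, L1 ω ∂μ) := by
  have hint1 : Integrable D μ := integrable_of_bdd' hD.aestronglyMeasurable hDb
  have hint2 : Integrable L1 μ := integrable_of_bdd' hL1.aestronglyMeasurable hLb
  have hint3 : Integrable (fun ω => D ω * L1 ω) μ := by
    refine integrable_of_bdd' (hD.mul hL1).aestronglyMeasurable (M := MD * ML) ?_
    filter_upwards [hDb, hLb] with ω h1 h2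
    rw [abs_mul]; exact mul_le_mul h1 h2 (abs_nonneg _) hMD
  have hint4 : Integrable (fun ω => D ω^2) μ := by
    refine integrable_of_bdd' (hD.pow_const 2).aestronglyMeasurable (M := MD^2) ?_
    filter_upwards [hDb] with ω h1
    rw [abs_pow]; exact pow_le_pow_left₀ (abs_nonneg _) h1 2
  have hint5 : Integrable (fun ω => (L1 ω)^2) μ := by
    refine integrable_of_bdd' (hL1.pow_const 2).aestronglyMeasurable (M := ML^2) ?_
    filter_upwards [hLb] with ω h1
    rw [abs_pow]; exact pow_le_pow_left₀ (abs_nonneg _) h1 2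
  have hmemJ : MemLp (fun ω => k + (D ω + ε * L1 ω)) 2 μ := by
    refine MemLp.mono_exponent (q := ⊤) ?_ le_top
    refine memLp_top_of_bound
      (((hD.add (hL1.const_mul ε)).const_add k).aestronglyMeasurable)
      (|k| + (MD + |ε| * ML)) ?_
    filter_upwards [hDb, hLb] with ω h1 h2
    rw [Real.norm_eq_abs]
    calc |k + (D ω + ε * L1 ω)| ≤ |k| + |D ω + ε * L1 ω| := abs_add_le _ _
    _ ≤ |k| + (|D ω| + |ε * L1 ω|) := by linarith [abs_add_le (D ω) (ε * L1 ω)]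
    _ ≤ |k| + (MD + |ε| * ML) := by
        rw [abs_mul]
        have := mul_le_mul_of_nonneg_left h2 (abs_nonneg ε)
        linarith
  have hmemL : MemLp (fun ω => ε * L1 ω) 2 μ := by
    refine MemLp.mono_exponent (q := ⊤) ?_ le_top
    refine memLp_top_of_bound (hL1.const_mul ε).aestronglyMeasurable (|ε| * ML) ?_
    filter_upwards [hLb] with ω h2
    rw [Real.norm_eq_abs, abs_mul]
    exact mul_le_mul_of_nonneg_left h2 (abs_nonneg ε)
  rw [ProbabilityTheory.variance_eq_sub hmemJ, ProbabilityTheory.variance_eq_sub hmemL]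
  simp only [Pi.pow_apply]
  have i2 : Integrable (fun ω => ε^2*(L1 ω)^2) μ := hint5.const_mul _
  have i3 : Integrable (fun ω => (2*ε)*(D ω*L1 ω)) μ := hint3.const_mul _
  have i4 : Integrable (fun ω => (2*k)*(D ω)) μ := hint1.const_mul _
  have i5 : Integrable (fun ω => (2*k*ε)*(L1 ω)) μ := hint2.const_mul _
  have i6 : Integrable (fun _ : Ω => k^2) μ := integrable_const _
  have e2 : ∫ ω, (k + (D ω + ε * L1 ω))^2 ∂μ =
      (∫ ω, D ω^2 ∂μ) + ε^2*(∫ ω, (L1 ω)^2 ∂μ) + 2*ε*(∫ ω, D ω * L1 ω ∂μ) +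
        2*k*(∫ ω, D ω ∂μ) + 2*k*ε*(∫ ω, L1 ω ∂μ) + k^2 := by
    have hrw : (fun ω => (k + (D ω + ε * L1 ω))^2) = fun ω =>
        D ω^2 + (ε^2*(L1 ω)^2 + ((2*ε)*(D ω*L1 ω) + ((2*k)*(D ω) + ((2*k*ε)*(L1 ω) + k^2)))) :=
      funext fun ω => by ring
    rw [show (∫ ω, (k + (D ω + ε * L1 ω))^2 ∂μ) = ∫ ω, (D ω^2 +
        (ε^2*(L1 ω)^2 + ((2*ε)*(D ω*L1 ω) + ((2*k)*(D ω) + ((2*k*ε)*(L1 ω) + k^2))))) ∂μ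
      from congrArg _ hrw]
    have i56 : Integrable (fun ω => (2*k*ε)*(L1 ω) + k^2) μ := i5.add i6
    have i456 : Integrable (fun ω => (2*k)*(D ω) + ((2*k*ε)*(L1 ω) + k^2)) μ := i4.add i56
    have i3456 : Integrable
        (fun ω => (2*ε)*(D ω*L1 ω) + ((2*k)*(D ω) + ((2*k*ε)*(L1 ω) + k^2))) μ := i3.add i456
    have i23456 : Integrable (fun ω => ε^2*(L1 ω)^2 +
        ((2*ε)*(D ω*L1 ω) + ((2*k)*(D ω) + ((2*k*ε)*(L1 ω) + k^2)))) μ := i2.add i3456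
    rw [integral_add hint4 i23456, integral_add i2 i3456, integral_add i3 i456,
      integral_add i4 i56, integral_add i5 i6,
      integral_const_mul, integral_const_mul, integral_const_mul, integral_const_mul,
      integral_const]
    simp [measure_univ]
    ring
  have e1 : ∫ ω, (k + (D ω + ε * L1 ω)) ∂μ = k + ((∫ ω, D ω ∂μ) + ε*(∫ ω, L1 ω ∂μ)) := by
    have j2 : Integrable (fun ω => ε * L1 ω) μ := hint2.const_mul ε
    have j12 : Integrable (fun ω => D ω + ε * L1 ω) μ := hint1.add j2
    rw [integral_add (integrable_const k) j12, integral_add hint1 j2, integral_const_mul,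
      integral_const]
    simp [measure_univ]
  have e3 : ∫ ω, (ε * L1 ω)^2 ∂μ = ε^2*(∫ ω, (L1 ω)^2 ∂μ) := by
    rw [show (fun ω => (ε * L1 ω)^2) = fun ω => ε^2 * (L1 ω)^2 from funext fun ω => by ring,
      integral_const_mul]
  have e4 : ∫ ω, ε * L1 ω ∂μ = ε*(∫ ω, L1 ω ∂μ) := integral_const_mul ε _
  rw [e2, e1, e3, e4]
  ring
set_option maxHeartbeats 1000000 in
/-- Theorem 1, variance part: for independent noises with zero mean, zero third moment and
a.s. uniform bound, the variance of the closed-loop cost satisfies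
`Var[J(ε)] = Var[δJ1(ε)] + O(ε⁴)` as `ε → 0`, where `δJ1` is the first-order cost
perturbation of the linear closed-loop system. -/
theorem variance_cost_eq_variance_linear_add_isBigO_fourth
    {Ω : Type*} [MeasurableSpace Ω] (μ : Measure Ω) [IsProbabilityMeasure μ]
    (T : ℕ) (A : ℕ → ℝ) (S : ℕ → ℝ → ℝ)
    (hS : ∀ t < T, ContDiff ℝ 3 (S t))
    (hS0 : ∀ t < T, S t 0 = 0)
    (hS1 : ∀ t < T, deriv (S t) 0 = 0)
    (w : ℕ → Ω → ℝ) (hmeas : ∀ t < T, Measurable (w t))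
    (hindep : ProbabilityTheory.iIndepFun (fun t : Fin T => w t) μ)
    (hmean : ∀ t < T, ∫ ω, w t ω ∂μ = 0)
    (hthird : ∀ t < T, ∫ ω, (w t ω) ^ 3 ∂μ = 0)
    (Cbd : ℝ) (hbd : ∀ t < T, ∀ᵐ ω ∂μ, |w t ω| ≤ Cbd)
    (δx δxl : ℝ → ℕ → Ω → ℝ)
    (hx0 : ∀ ε ω, δx ε 0 ω = 0)
    (hx : ∀ ε, ∀ t < T, ∀ ω, δx ε (t + 1) ω = A t * δx ε t ω + S t (δx ε t ω) + ε * w t ω)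
    (hl0 : ∀ ε ω, δxl ε 0 ω = 0)
    (hl : ∀ ε, ∀ t < T, ∀ ω, δxl ε (t + 1) ω = A t * δxl ε t ω + ε * w t ω)
    (c C : ℕ → ℝ) (H : ℕ → ℝ → ℝ)
    (hH : ∀ t ≤ T, ContDiff ℝ 3 (H t))
    (hH0 : ∀ t ≤ T, H t 0 = 0)
    (hH1 : ∀ t ≤ T, deriv (H t) 0 = 0) :
    (fun ε : ℝ =>
        ProbabilityTheory.variance
          (fun ω => ∑ t ∈ Finset.range (T + 1), (c t + C t * δx ε t ω + H t (δx ε t ω))) μ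
        - ProbabilityTheory.variance
          (fun ω => ∑ t ∈ Finset.range (T + 1), C t * δxl ε t ω) μ)
      =O[nhds (0 : ℝ)] (fun ε : ℝ => ε ^ 4) := by
  classical
  set C' : ℝ := max Cbd 0 with hC'def
  have hC'0 : (0:ℝ) ≤ C' := le_max_right _ _
  set qS : ℕ → ℝ := fun u => deriv (deriv (S u)) 0 / 2 with hqSdef
  set qH : ℕ → ℝ := fun u => deriv (deriv (H u)) 0 / 2 with hqHdef
  set y : ℕ → Ω → ℝ := seqY A w with hydef
  set z : ℕ → Ω → ℝ := seqZ A qS w with hzdef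
  have hall : ∀ᵐ ω ∂μ, ∀ t, t < T → |w t ω| ≤ C' := ae_bound_all hbd
  have hymeas : ∀ t, t ≤ T → Measurable (y t) := fun t ht =>
    seqY_measurable fun s hs => hmeas s (by omega)
  have hzmeas : ∀ t, t ≤ T → Measurable (z t) := fun t ht =>
    seqZ_measurable fun s hs => hmeas s (by omega)
  have hδmeas : ∀ ε : ℝ, ∀ t ≤ T, Measurable (δx ε t) := by
    intro ε t htT
    induction t with
    | zero =>
      have h1 : δx ε 0 = fun _ => (0:ℝ) := funext fun ω => hx0 ε ω
      rw [h1]; exact measurable_const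
    | succ t ih =>
      have h1 := ih (by omega)
      have h2 : δx ε (t+1) = fun ω => A t * δx ε t ω + S t (δx ε t ω) + ε * w t ω :=
        funext fun ω => hx ε t (by omega) ω
      rw [h2]
      exact ((h1.const_mul _).add
        ((hS t (by omega)).continuous.measurable.comp h1)).add ((hmeas t (by omega)).const_mul ε)
  have hδl : ∀ ε : ℝ, ∀ t ≤ T, ∀ ω, δxl ε t ω = ε * y t ω := by
    intro ε t htT
    induction t with
    | zero =>
      intro ω
      have : y 0 ω = 0 := rfl
      rw [hl0, this, mul_zero]
    | succ t ih =>
      intro ω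
      rw [hl ε t (by omega) ω, ih (by omega) ω]
      have : y (t+1) ω = A t * y t ω + w t ω := rfl
      rw [this]; ring
  -- uniform bounds for y and z
  set Ybd : ℝ := ∑ s ∈ Finset.range (T+1), |seqYbd A C' s| with hYbddef
  have hYbd0 : 0 ≤ Ybd := Finset.sum_nonneg fun _ _ => abs_nonneg _
  have hYbd : ∀ t, t ≤ T → ∀ ω, (∀ s < T, |w s ω| ≤ C') → |y t ω| ≤ Ybd := by
    intro t ht ω hg
    refine (abs_seqY_le fun u hu => hg u (by omega)).trans ?_
    refine (le_abs_self _).trans ?_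
    exact Finset.single_le_sum (f := fun s => |seqYbd A C' s|) (fun _ _ => abs_nonneg _)
      (Finset.mem_range.mpr (by omega))
  set Zbd : ℝ := ∑ s ∈ Finset.range (T+1), |seqZbd A qS C' s| with hZbddef
  have hZbd0 : 0 ≤ Zbd := Finset.sum_nonneg fun _ _ => abs_nonneg _
  have hZbd : ∀ t, t ≤ T → ∀ ω, (∀ s < T, |w s ω| ≤ C') → |z t ω| ≤ Zbd := by
    intro t ht ω hg
    refine (abs_seqZ_le fun u hu => hg u (by omega)).trans ?_
    refine (le_abs_self _).trans ?_
    exact Finset.single_le_sum (f := fun s => |seqZbd A qS C' s|) (fun _ _ => abs_nonneg _)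
      (Finset.mem_range.mpr (by omega))
  -- linear and quadratic cost coefficients
  set L1 : Ω → ℝ := fun ω => ∑ t ∈ Finset.range (T+1), C t * y t ω with hL1def
  set Q : Ω → ℝ := fun ω => ∑ t ∈ Finset.range (T+1), (C t * z t ω + qH t * (y t ω)^2)
    with hQdef
  have hL1meas : Measurable L1 := by
    apply Finset.measurable_sum
    intro t htm
    rw [Finset.mem_range] at htm
    exact (hymeas t (by omega)).const_mul _
  have hQmeas : Measurable Q := by
    apply Finset.measurable_sum
    intro t htm
    rw [Finset.mem_range] at htm
    exact ((hzmeas t (by omega)).const_mul _).add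
      (((hymeas t (by omega)).pow_const 2).const_mul _)
  set BL : ℝ := ∑ t ∈ Finset.range (T+1), |C t| * Ybd with hBLdef
  have hBL0 : 0 ≤ BL := Finset.sum_nonneg fun _ _ => mul_nonneg (abs_nonneg _) hYbd0
  have hBL : ∀ ω, (∀ s < T, |w s ω| ≤ C') → |L1 ω| ≤ BL := by
    intro ω hg
    refine (Finset.abs_sum_le_sum_abs _ _).trans ?_
    refine Finset.sum_le_sum fun t htm => ?_
    rw [Finset.mem_range] at htm
    rw [abs_mul]
    exact mul_le_mul_of_nonneg_left (hYbd t (by omega) ω hg) (abs_nonneg _)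
  set BQ : ℝ := ∑ t ∈ Finset.range (T+1), (|C t| * Zbd + |qH t| * Ybd^2) with hBQdef
  have hBQ0 : 0 ≤ BQ := Finset.sum_nonneg fun _ _ =>
    add_nonneg (mul_nonneg (abs_nonneg _) hZbd0)
      (mul_nonneg (abs_nonneg _) (pow_nonneg hYbd0 2))
  have hBQ : ∀ ω, (∀ s < T, |w s ω| ≤ C') → |Q ω| ≤ BQ := by
    intro ω hg
    refine (Finset.abs_sum_le_sum_abs _ _).trans ?_
    refine Finset.sum_le_sum fun t htm => ?_
    rw [Finset.mem_range] at htm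
    refine (abs_add_le _ _).trans ?_
    rw [abs_mul, abs_mul, abs_pow]
    refine add_le_add (mul_le_mul_of_nonneg_left (hZbd t (by omega) ω hg) (abs_nonneg _)) ?_
    refine mul_le_mul_of_nonneg_left ?_ (abs_nonneg _)
    exact pow_le_pow_left₀ (abs_nonneg _) (hYbd t (by omega) ω hg) 2
  -- state expansion
  obtain ⟨B, hB1, hB⟩ := state_expansion T A S hS hS0 hS1 w C' hC'0 δx hx0 hx T le_rfl
  have hB0 : (0:ℝ) < B := lt_of_lt_of_le one_pos hB1
  -- cubic bounds for H
  have hHK : ∀ t : ℕ, ∃ K, 0 ≤ K ∧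
      (t ≤ T → ∀ x : ℝ, |x| ≤ 1 → |H t x - qH t * x^2| ≤ K * |x|^3) := by
    intro t
    by_cases ht : t ≤ T
    · obtain ⟨K, hK0, hKb⟩ := cubic_bound (hH t ht)
      refine ⟨K, hK0, fun _ x hx' => ?_⟩
      have h := hKb x hx'
      rw [hH0 t ht, hH1 t ht] at h
      simpa [hqHdef] using h
    · exact ⟨0, le_rfl, fun h => absurd h ht⟩
  choose KH hKH0 hKHb using hHK
  set M : ℝ := ∑ t ∈ Finset.range (T+1),
    (|C t| * B + KH t * B^3 + |qH t| * (B + Zbd) * (B + Ybd)) with hMdef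
  have hM0 : 0 ≤ M := by
    refine Finset.sum_nonneg fun t _ => ?_
    have h1 : 0 ≤ |C t| * B := mul_nonneg (abs_nonneg _) hB0.le
    have h2 : 0 ≤ KH t * B^3 := mul_nonneg (hKH0 t) (by positivity)
    have h3 : 0 ≤ |qH t| * (B + Zbd) * (B + Ybd) := by
      refine mul_nonneg (mul_nonneg (abs_nonneg _) ?_) ?_ <;> linarith
    linarith
  -- cost expansion
  have hcost : ∀ ε : ℝ, |ε| * B ≤ 1 → ∀ ω, (∀ s < T, |w s ω| ≤ C') →
      |(∑ t ∈ Finset.range (T+1), (C t * δx ε t ω + H t (δx ε t ω)))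
        - ε * L1 ω - ε^2 * Q ω| ≤ M * |ε|^3 := by
    intro ε hε ω hg
    have hε1 : |ε| ≤ 1 := le_trans (le_mul_of_one_le_right (abs_nonneg ε) hB1) hε
    have hterm := hB ε ω hε hg
    have hiden : (∑ t ∈ Finset.range (T+1), (C t * δx ε t ω + H t (δx ε t ω)))
        - ε * L1 ω - ε^2 * Q ω =
        ∑ t ∈ Finset.range (T+1), (C t * (δx ε t ω - ε * y t ω - ε^2 * z t ω) +
          (H t (δx ε t ω) - qH t * (ε^2 * (y t ω)^2))) := by
      simp only [hL1def, hQdef, Finset.mul_sum, ← Finset.sum_sub_distrib]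
      refine Finset.sum_congr rfl fun t _ => by ring
    rw [hiden]
    refine (Finset.abs_sum_le_sum_abs _ _).trans ?_
    rw [hMdef, Finset.sum_mul]
    refine Finset.sum_le_sum fun t htm => ?_
    rw [Finset.mem_range] at htm
    have htle : t ≤ T := by omega
    obtain ⟨hXt, hdt⟩ := hterm t htle
    have hyb := hYbd t htle ω hg
    have hzb := hZbd t htle ω hg
    have hBε0 : 0 ≤ B * |ε| := by positivity
    have hBε1 : B * |ε| ≤ 1 := by
      calc B * |ε| = |ε| * B := by ring
      _ ≤ 1 := hε
    have hδ1 : |δx ε t ω| ≤ 1 := hXt.trans hBε1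
    have hH3 : |H t (δx ε t ω) - qH t * (δx ε t ω)^2| ≤ KH t * (B*|ε|)^3 :=
      (hKHb t htle (δx ε t ω) hδ1).trans
        (mul_le_mul_of_nonneg_left (pow_le_pow_left₀ (abs_nonneg _) hXt 3) (hKH0 t))
    have hdiff : |δx ε t ω - ε * y t ω| ≤ (B + Zbd) * ε^2 := by
      have h1 : |δx ε t ω - ε * y t ω| ≤
          |δx ε t ω - ε * y t ω - ε^2 * z t ω| + |ε^2 * z t ω| := by
        calc |δx ε t ω - ε * y t ω|
            = |(δx ε t ω - ε * y t ω - ε^2 * z t ω) + ε^2 * z t ω| := by ring_nf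
        _ ≤ _ := abs_add_le _ _
      have h2 : |ε^2 * z t ω| ≤ ε^2 * Zbd := by
        rw [abs_mul, abs_pow, sq_abs]
        exact mul_le_mul_of_nonneg_left hzb (sq_nonneg ε)
      have h3 : |ε|^3 ≤ ε^2 := by
        have h := pow_le_pow_of_le_one (abs_nonneg ε) hε1 (show 2 ≤ 3 by omega)
        rwa [sq_abs] at h
      have h4 : B * |ε|^3 ≤ B * ε^2 := mul_le_mul_of_nonneg_left h3 hB0.le
      linarith
    have hsum : |δx ε t ω + ε * y t ω| ≤ (B + Ybd) * |ε| := by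
      have h1 : |ε * y t ω| ≤ |ε| * Ybd := by
        rw [abs_mul]; exact mul_le_mul_of_nonneg_left hyb (abs_nonneg ε)
      calc |δx ε t ω + ε * y t ω| ≤ |δx ε t ω| + |ε * y t ω| := abs_add_le _ _
      _ ≤ B * |ε| + |ε| * Ybd := add_le_add hXt h1
      _ = (B + Ybd) * |ε| := by ring
    have hiden2 : C t * (δx ε t ω - ε * y t ω - ε^2 * z t ω) +
        (H t (δx ε t ω) - qH t * (ε^2 * (y t ω)^2)) =
        C t * (δx ε t ω - ε * y t ω - ε^2 * z t ω) +
          (H t (δx ε t ω) - qH t * (δx ε t ω)^2) +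
          qH t * ((δx ε t ω - ε * y t ω) * (δx ε t ω + ε * y t ω)) := by ring
    rw [hiden2]
    have hfin : |C t * (δx ε t ω - ε * y t ω - ε^2 * z t ω) +
          (H t (δx ε t ω) - qH t * (δx ε t ω)^2) +
          qH t * ((δx ε t ω - ε * y t ω) * (δx ε t ω + ε * y t ω))| ≤
        |C t| * |δx ε t ω - ε * y t ω - ε^2 * z t ω| +
          |H t (δx ε t ω) - qH t * (δx ε t ω)^2| +
          |qH t| * (|δx ε t ω - ε * y t ω| * |δx ε t ω + ε * y t ω|) := by
      refine le_trans (abs_add_le _ _) ?_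
      have h0 := abs_add_le (C t * (δx ε t ω - ε * y t ω - ε^2 * z t ω))
        (H t (δx ε t ω) - qH t * (δx ε t ω)^2)
      have g1 : |C t * (δx ε t ω - ε * y t ω - ε^2 * z t ω)| =
          |C t| * |δx ε t ω - ε * y t ω - ε^2 * z t ω| := abs_mul _ _
      have g2 : |qH t * ((δx ε t ω - ε * y t ω) * (δx ε t ω + ε * y t ω))| =
          |qH t| * (|δx ε t ω - ε * y t ω| * |δx ε t ω + ε * y t ω|) := by
        rw [abs_mul, abs_mul]
      linarith
    refine hfin.trans ?_
    have b1 : |C t| * |δx ε t ω - ε * y t ω - ε^2 * z t ω| ≤ |C t| * (B * |ε|^3) :=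
      mul_le_mul_of_nonneg_left hdt (abs_nonneg _)
    have b3 : |δx ε t ω - ε * y t ω| * |δx ε t ω + ε * y t ω| ≤
        ((B + Zbd) * ε^2) * ((B + Ybd) * |ε|) := by
      refine mul_le_mul hdiff hsum (abs_nonneg _) ?_
      positivity
    have b4 : |qH t| * (|δx ε t ω - ε * y t ω| * |δx ε t ω + ε * y t ω|) ≤
        |qH t| * (((B + Zbd) * ε^2) * ((B + Ybd) * |ε|)) :=
      mul_le_mul_of_nonneg_left b3 (abs_nonneg _)
    have he2 : ε^2 = |ε|^2 := (sq_abs ε).symm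
    have hfac : |qH t| * (((B + Zbd) * ε^2) * ((B + Ybd) * |ε|)) =
        |qH t| * (B + Zbd) * (B + Ybd) * |ε|^3 := by rw [he2]; ring
    have hb3 : KH t * (B*|ε|)^3 = KH t * B^3 * |ε|^3 := by ring
    have hexp : (|C t| * B + KH t * B^3 + |qH t| * (B + Zbd) * (B + Ybd)) * |ε|^3 =
        |C t| * (B * |ε|^3) + KH t * B^3 * |ε|^3 +
          |qH t| * (B + Zbd) * (B + Ybd) * |ε|^3 := by ring
    rw [hexp]
    rw [hb3] at hH3
    rw [hfac] at b4
    linarith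
  -- zero mean of L1
  have hL1int : ∀ t, t ≤ T → Integrable (fun ω => C t * y t ω) μ := by
    intro t ht
    refine integrable_of_bdd' ((hymeas t ht).const_mul _).aestronglyMeasurable
      (M := |C t| * Ybd) ?_
    filter_upwards [hall] with ω hg
    rw [abs_mul]
    exact mul_le_mul_of_nonneg_left (hYbd t ht ω hg) (abs_nonneg _)
  have hL1zero : ∫ ω, L1 ω ∂μ = 0 := by
    simp only [hL1def]
    rw [integral_finset_sum _ (fun t htm => hL1int t (by
      rw [Finset.mem_range] at htm; omega))]
    refine Finset.sum_eq_zero fun t htm => ?_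
    rw [Finset.mem_range] at htm
    rw [integral_const_mul,
      integral_seqY_eq_zero hmeas hmean hbd (show t ≤ T by omega), mul_zero]
  -- ∫ Q L1 = 0
  have hQL1zero : ∫ ω, Q ω * L1 ω ∂μ = 0 := by
    have hexp : (fun ω => Q ω * L1 ω) = fun ω =>
        ∑ t ∈ Finset.range (T+1), ∑ k ∈ Finset.range (T+1),
          ((C t * C k) * (z t ω * y k ω) + (qH t * C k) * (y t ω * y t ω * y k ω)) := by
      funext ω
      simp only [hQdef, hL1def]
      rw [Finset.sum_mul_sum]
      exact Finset.sum_congr rfl fun t _ => Finset.sum_congr rfl fun k _ => by ring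
    rw [hexp]
    have hint1 : ∀ t k, t ≤ T → k ≤ T → ∀ r : ℝ,
        Integrable (fun ω => r * (z t ω * y k ω)) μ := by
      intro t k ht hk r
      refine integrable_of_bdd'
        (((hzmeas t ht).mul (hymeas k hk)).const_mul r).aestronglyMeasurable
        (M := |r| * (Zbd * Ybd)) ?_
      filter_upwards [hall] with ω hg
      rw [abs_mul, abs_mul]
      refine mul_le_mul_of_nonneg_left ?_ (abs_nonneg r)
      exact mul_le_mul (hZbd t ht ω hg) (hYbd k hk ω hg) (abs_nonneg _) hZbd0
    have hint2 : ∀ t k, t ≤ T → k ≤ T → ∀ r : ℝ,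
        Integrable (fun ω => r * (y t ω * y t ω * y k ω)) μ := by
      intro t k ht hk r
      refine integrable_of_bdd'
        ((((hymeas t ht).mul (hymeas t ht)).mul (hymeas k hk)).const_mul r).aestronglyMeasurable
        (M := |r| * (Ybd * Ybd * Ybd)) ?_
      filter_upwards [hall] with ω hg
      rw [abs_mul, abs_mul, abs_mul]
      refine mul_le_mul_of_nonneg_left ?_ (abs_nonneg r)
      refine mul_le_mul (mul_le_mul (hYbd t ht ω hg) (hYbd t ht ω hg) (abs_nonneg _) hYbd0)
        (hYbd k hk ω hg) (abs_nonneg _) (mul_nonneg hYbd0 hYbd0)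
    rw [integral_finset_sum]
    · refine Finset.sum_eq_zero fun t htm => ?_
      rw [Finset.mem_range] at htm
      rw [integral_finset_sum]
      · refine Finset.sum_eq_zero fun k hkm => ?_
        rw [Finset.mem_range] at hkm
        have i1 : Integrable (fun ω => (C t * C k) * (z t ω * y k ω)) μ :=
          hint1 t k (by omega) (by omega) _
        have i2 : Integrable (fun ω => (qH t * C k) * (y t ω * y t ω * y k ω)) μ :=
          hint2 t k (by omega) (by omega) _
        rw [integral_add i1 i2, integral_const_mul, integral_const_mul]
        rw [integral_seqZ_mul_seqY_eq_zero hmeas hindep hmean hthird hbd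
          (show t ≤ T by omega) (show k ≤ T by omega)]
        rw [integral_yyy_eq_zero hmeas hindep hmean hthird hbd
          (show t ≤ T by omega) (show t ≤ T by omega) (show k ≤ T by omega)]
        simp
      · intro k hkm
        rw [Finset.mem_range] at hkm
        exact (hint1 t k (by omega) (by omega) _).add (hint2 t k (by omega) (by omega) _)
    · intro t htm
      rw [Finset.mem_range] at htm
      apply integrable_finset_sum
      intro k hkm
      rw [Finset.mem_range] at hkm
      exact (hint1 t k (by omega) (by omega) _).add (hint2 t k (by omega) (by omega) _)
  -- final big-O argument
  rw [Asymptotics.isBigO_iff]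
  refine ⟨2*(BQ + M)^2 + 2*(M*BL), ?_⟩
  have hmemball : ∀ᶠ ε : ℝ in nhds 0, |ε| < 1/B := by
    have h1 : (0:ℝ) < 1/B := by positivity
    filter_upwards [Metric.ball_mem_nhds (0:ℝ) h1] with ε hε
    simpa [Real.dist_eq] using hε
  filter_upwards [hmemball] with ε hεball
  have hεB : |ε| * B ≤ 1 := by
    rw [lt_div_iff₀ hB0] at hεball
    exact hεball.le
  have hε1 : |ε| ≤ 1 := le_trans (le_mul_of_one_le_right (abs_nonneg ε) hB1) hεB
  -- define D
  set k : ℝ := ∑ t ∈ Finset.range (T+1), c t with hkdef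
  set X : Ω → ℝ := fun ω => ∑ t ∈ Finset.range (T+1), (C t * δx ε t ω + H t (δx ε t ω))
    with hXdef
  set D : Ω → ℝ := fun ω => X ω - ε * L1 ω with hDdef
  have hXmeas : Measurable X := by
    apply Finset.measurable_sum
    intro t htm
    rw [Finset.mem_range] at htm
    have h1 := hδmeas ε t (by omega)
    exact (h1.const_mul _).add ((hH t (by omega)).continuous.measurable.comp h1)
  have hDmeas : Measurable D := hXmeas.sub (hL1meas.const_mul ε)
  -- rewrite the two variance arguments
  have hJeq : (fun ω => ∑ t ∈ Finset.range (T + 1), (c t + C t * δx ε t ω + H t (δx ε t ω)))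
      = fun ω => k + (D ω + ε * L1 ω) := by
    funext ω
    have h1 : D ω + ε * L1 ω = X ω := by simp only [hDdef]; ring
    rw [h1]
    simp only [hXdef, hkdef]
    rw [← Finset.sum_add_distrib]
    exact Finset.sum_congr rfl fun t _ => by ring
  have hLeq : (fun ω => ∑ t ∈ Finset.range (T + 1), C t * δxl ε t ω)
      = fun ω => ε * L1 ω := by
    funext ω
    simp only [hL1def, Finset.mul_sum]
    refine Finset.sum_congr rfl fun t htm => ?_
    rw [Finset.mem_range] at htm
    rw [hδl ε t (by omega) ω]; ring
  rw [hJeq, hLeq]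
  -- bound on D
  have hDbound : ∀ᵐ ω ∂μ, |D ω| ≤ (BQ + M) * ε^2 := by
    filter_upwards [hall] with ω hg
    have h1 := hcost ε hεB ω hg
    have h2 : |D ω| ≤ |X ω - ε * L1 ω - ε^2 * Q ω| + |ε^2 * Q ω| := by
      calc |D ω| = |(X ω - ε * L1 ω - ε^2 * Q ω) + ε^2 * Q ω| := by
            simp only [hDdef]; ring_nf
      _ ≤ _ := abs_add_le _ _
    have h3 : |ε^2 * Q ω| ≤ ε^2 * BQ := by
      rw [abs_mul, abs_pow, sq_abs]
      exact mul_le_mul_of_nonneg_left (hBQ ω hg) (sq_nonneg ε)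
    have h4 : |ε|^3 ≤ ε^2 := by
      have h := pow_le_pow_of_le_one (abs_nonneg ε) hε1 (show 2 ≤ 3 by omega)
      rwa [sq_abs] at h
    have h5 : M * |ε|^3 ≤ M * ε^2 := mul_le_mul_of_nonneg_left h4 hM0
    have h6 : |X ω - ε * L1 ω - ε^2 * Q ω| ≤ M * |ε|^3 := h1
    calc |D ω| ≤ M * |ε|^3 + ε^2 * BQ := by linarith
    _ ≤ (BQ + M) * ε^2 := by linarith
  have hLbound : ∀ᵐ ω ∂μ, |L1 ω| ≤ BL := by
    filter_upwards [hall] with ω hg using hBL ω hg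
  have hMD0 : 0 ≤ (BQ + M) * ε^2 := by positivity
  rw [variance_expand μ k ε D L1 hDmeas hL1meas ((BQ + M) * ε^2) BL hMD0 hBL0 hDbound hLbound]
  rw [hL1zero]
  -- split ∫ D L1
  have hQL1int : Integrable (fun ω => Q ω * L1 ω) μ := by
    refine integrable_of_bdd' (hQmeas.mul hL1meas).aestronglyMeasurable (M := BQ * BL) ?_
    filter_upwards [hall] with ω hg
    rw [abs_mul]
    exact mul_le_mul (hBQ ω hg) (hBL ω hg) (abs_nonneg _) hBQ0
  have hrhomeas : Measurable (fun ω => (D ω - ε^2 * Q ω) * L1 ω) :=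
    (hDmeas.sub (hQmeas.const_mul _)).mul hL1meas
  have hrhoL1bd : ∀ᵐ ω ∂μ, |(D ω - ε^2 * Q ω) * L1 ω| ≤ (M * |ε|^3) * BL := by
    filter_upwards [hall] with ω hg
    have h1 : |D ω - ε^2 * Q ω| ≤ M * |ε|^3 := by
      have := hcost ε hεB ω hg
      have heq : D ω - ε^2 * Q ω = X ω - ε * L1 ω - ε^2 * Q ω := by
        simp only [hDdef]
      rw [heq]; exact this
    rw [abs_mul]
    exact mul_le_mul h1 (hBL ω hg) (abs_nonneg _) (by positivity)
  have hrhoL1int : Integrable (fun ω => (D ω - ε^2 * Q ω) * L1 ω) μ :=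
    integrable_of_bdd' hrhomeas.aestronglyMeasurable hrhoL1bd
  have hsplit : ∫ ω, D ω * L1 ω ∂μ = ε^2 * (∫ ω, Q ω * L1 ω ∂μ) +
      ∫ ω, (D ω - ε^2 * Q ω) * L1 ω ∂μ := by
    have hfn : (fun ω => D ω * L1 ω) = fun ω =>
        ε^2 * (Q ω * L1 ω) + (D ω - ε^2 * Q ω) * L1 ω := funext fun ω => by ring
    rw [hfn, integral_add (hQL1int.const_mul _) hrhoL1int, integral_const_mul]
  rw [hsplit, hQL1zero, mul_zero, zero_add]
  -- final numeric bound
  have hDint : Integrable D μ := integrable_of_bdd' hDmeas.aestronglyMeasurable hDbound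
  have hDsqint : Integrable (fun ω => D ω^2) μ := by
    refine integrable_of_bdd' (hDmeas.pow_const 2).aestronglyMeasurable
      (M := ((BQ + M) * ε^2)^2) ?_
    filter_upwards [hDbound] with ω h1
    rw [abs_pow]
    exact pow_le_pow_left₀ (abs_nonneg _) h1 2
  have hIDsq : ∫ ω, D ω^2 ∂μ ≤ ((BQ + M) * ε^2)^2 := by
    have := integral_mono_ae hDsqint (integrable_const (((BQ + M) * ε^2)^2)) ?_
    · simpa [measure_univ] using this
    · filter_upwards [hDbound] with ω h1
      have : |D ω^2| ≤ ((BQ + M) * ε^2)^2 := by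
        rw [abs_pow]; exact pow_le_pow_left₀ (abs_nonneg _) h1 2
      exact (le_abs_self _).trans this
  have hIDsq0 : 0 ≤ ∫ ω, D ω^2 ∂μ := integral_nonneg fun ω => sq_nonneg _
  have hID : |∫ ω, D ω ∂μ| ≤ (BQ + M) * ε^2 := by
    have h0 : |∫ ω, D ω ∂μ| ≤ ∫ ω, |D ω| ∂μ := by
      simpa [Real.norm_eq_abs] using norm_integral_le_integral_norm (μ := μ) D
    refine h0.trans ?_
    have := integral_mono_ae hDint.abs (integrable_const ((BQ + M) * ε^2)) hDbound
    simpa [measure_univ] using this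
  have hIrho : |∫ ω, (D ω - ε^2 * Q ω) * L1 ω ∂μ| ≤ (M * |ε|^3) * BL := by
    have h0 : |∫ ω, (D ω - ε^2 * Q ω) * L1 ω ∂μ| ≤ ∫ ω, |(D ω - ε^2 * Q ω) * L1 ω| ∂μ := by
      simpa only [Real.norm_eq_abs] using
        norm_integral_le_integral_norm (μ := μ) (fun ω => (D ω - ε^2 * Q ω) * L1 ω)
    refine h0.trans ?_
    have := integral_mono_ae hrhoL1int.abs (integrable_const ((M * |ε|^3) * BL)) hrhoL1bd
    simpa [measure_univ] using this
  -- put it together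
  have habs4 : ‖(ε:ℝ)^4‖ = |ε|^4 := by
    rw [Real.norm_eq_abs, abs_pow]
  rw [Real.norm_eq_abs, habs4]
  have he4 : ε^2 * ε^2 = |ε|^4 := by
    rw [← sq_abs]; ring
  have hterm1 : ∫ ω, D ω^2 ∂μ ≤ (BQ + M)^2 * |ε|^4 := by
    calc ∫ ω, D ω^2 ∂μ ≤ ((BQ + M) * ε^2)^2 := hIDsq
    _ = (BQ + M)^2 * (ε^2 * ε^2) := by ring
    _ = (BQ + M)^2 * |ε|^4 := by rw [he4]
  have hterm2 : (∫ ω, D ω ∂μ)^2 ≤ (BQ + M)^2 * |ε|^4 := by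
    have h1 : (∫ ω, D ω ∂μ)^2 = |∫ ω, D ω ∂μ|^2 := (sq_abs _).symm
    rw [h1]
    calc |∫ ω, D ω ∂μ|^2 ≤ ((BQ + M) * ε^2)^2 :=
      pow_le_pow_left₀ (abs_nonneg _) hID 2
    _ = (BQ + M)^2 * (ε^2 * ε^2) := by ring
    _ = (BQ + M)^2 * |ε|^4 := by rw [he4]
  have hterm3 : |2*ε*(∫ ω, (D ω - ε^2 * Q ω) * L1 ω ∂μ)| ≤ 2*(M*BL) * |ε|^4 := by
    rw [abs_mul, abs_mul]
    have h1 : |(2:ℝ)| = 2 := by norm_num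
    rw [h1]
    calc 2 * |ε| * |∫ ω, (D ω - ε^2 * Q ω) * L1 ω ∂μ| ≤ 2 * |ε| * ((M * |ε|^3) * BL) := by
          refine mul_le_mul_of_nonneg_left hIrho ?_
          positivity
    _ = 2*(M*BL) * (|ε| * |ε|^3) := by ring
    _ = 2*(M*BL) * |ε|^4 := by rw [show |ε| * |ε|^3 = |ε|^4 by ring]
  have hsq0 : 0 ≤ (∫ ω, D ω ∂μ)^2 := sq_nonneg _
  calc |∫ ω, D ω^2 ∂μ - (∫ ω, D ω ∂μ)^2 +
        2*ε*(∫ ω, (D ω - ε^2 * Q ω) * L1 ω ∂μ) - 2*ε*(∫ ω, D ω ∂μ)*0|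
      ≤ |∫ ω, D ω^2 ∂μ - (∫ ω, D ω ∂μ)^2| +
        |2*ε*(∫ ω, (D ω - ε^2 * Q ω) * L1 ω ∂μ)| := by
        rw [mul_zero, sub_zero]
        exact abs_add_le _ _
  _ ≤ (BQ + M)^2 * |ε|^4 + 2*(M*BL) * |ε|^4 := by
      refine add_le_add ?_ hterm3
      rw [abs_sub_le_iff]
      constructor
      · linarith
      · linarith
  _ ≤ (2*(BQ + M)^2 + 2*(M*BL)) * |ε|^4 := by
      have h1 : 0 ≤ (BQ + M)^2 * |ε|^4 := by positivity
      linarith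
end
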